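/- arXiv:1110.4355 — 6 statements merged into one kernel-verified Lean document; each statement's English description precedes it below -/
import Mathlib

section
/- Let Q be an m×m real symmetric positive definite matrix, F an arbitrary m×m real matrix, and let P₁, P₂ be m×m real symmetric matrices with P₁ ≻ P₂ ≻ 0 (i.e., P₁ − P₂ and P₂ are positive definite). Then det(F P₁ Fᵀ + Q) / det(P₁) < det(F P₂ Fᵀ + Q) / det(P₂). In other words, the ratio det(L(P))/det(P) for the Lyapunov update L(P) = F P Fᵀ + Q is strictly decreasing in P with respect to the Loewner order. -/
open Matrix Finset
open scoped MatrixOrder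

variable {n : Type*} [Fintype n] [DecidableEq n]

lemma my_posdef_conj {A B : Matrix n n ℝ} (hA : A.PosDef) (hB : IsUnit B.det) :
    (Bᴴ * A * B).PosDef := by
  refine PosDef.of_dotProduct_mulVec_pos (isHermitian_conjTranspose_mul_mul B hA.1) fun x hx => ?_
  have hBx : B *ᵥ x ≠ 0 := by
    intro h
    exact hx ((mulVec_injective_iff_isUnit.2 ((isUnit_iff_isUnit_det B).2 hB)) (by simpa using h))
  simpa only [star_mulVec, dotProduct_mulVec, vecMul_vecMul] using hA.dotProduct_mulVec_pos hBx

lemma my_one_lt_det_one_add {m : ℕ} (hm : 0 < m) {K : Matrix (Fin m) (Fin m) ℝ}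
    (hK : K.PosDef) : 1 < (1 + K).det := by
  have hH : K.IsHermitian := hK.1
  set U : Matrix (Fin m) (Fin m) ℝ := (hH.eigenvectorUnitary : Matrix (Fin m) (Fin m) ℝ) with hU
  have hU2 : star U * U = 1 := (Unitary.mem_iff.mp hH.eigenvectorUnitary.2).1
  have hdiag : star U * K * U = diagonal (RCLike.ofReal ∘ hH.eigenvalues) :=
    by rw [← hH.conjStarAlgAut_star_eigenvectorUnitary, Unitary.conjStarAlgAut_star_apply]
  have hconj : star U * (1 + K) * U = 1 + diagonal (RCLike.ofReal ∘ hH.eigenvalues) := by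
    rw [mul_add, add_mul, mul_one, hU2, hdiag]
  have hdetU : (star U).det * U.det = 1 := by
    rw [← det_mul, hU2, det_one]
  have h1 : (1 + K).det = ∏ i, (1 + hH.eigenvalues i) := by
    have := congrArg det hconj
    rw [det_mul, det_mul] at this
    rw [mul_right_comm, hdetU, one_mul] at this
    rw [this, ← diagonal_one, diagonal_add, det_diagonal]
    simp [Pi.add_apply]
  rw [h1]
  have : (1 : ℝ) = ∏ _i : Fin m, (1 : ℝ) := by simp
  rw [this]
  refine Finset.prod_lt_prod_of_nonempty (fun i _ => one_pos) (fun i _ => ?_)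
    (Finset.univ_nonempty_iff.2 ⟨⟨0, hm⟩⟩)
  have := hK.eigenvalues_pos i
  linarith

lemma my_det_lt_det {m : ℕ} (hm : 0 < m) {X Y : Matrix (Fin m) (Fin m) ℝ}
    (hX : X.PosDef) (hD : (Y - X).PosDef) : X.det < Y.det := by
  set S := CFC.sqrt X with hSdef
  have hSsemi : S.PosSemidef := (CFC.sqrt_nonneg X).posSemidef
  have hSS : S * S = X := CFC.sqrt_mul_sqrt_self X hX.posSemidef.nonneg
  have hdetS : IsUnit S.det := by
    have h : S.det * S.det = X.det := by rw [← det_mul, hSS]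
    have := hX.det_pos
    exact isUnit_iff_ne_zero.2 (by nlinarith)
  have hSinv : S⁻¹ * S = 1 := nonsing_inv_mul _ hdetS
  have hSinv' : S * S⁻¹ = 1 := mul_nonsing_inv _ hdetS
  have hSherm : (S⁻¹)ᴴ = S⁻¹ := by
    rw [conjTranspose_nonsing_inv, hSsemi.1.eq]
  have hK : (S⁻¹ * (Y - X) * S⁻¹).PosDef := by
    have h := my_posdef_conj hD (isUnit_nonsing_inv_det _ hdetS)
    rwa [hSherm] at h
  have hfact : Y = S * (1 + S⁻¹ * (Y - X) * S⁻¹) * S := by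
    rw [mul_add, add_mul, mul_one, hSS]
    rw [show S * (S⁻¹ * (Y - X) * S⁻¹) * S
        = (S * S⁻¹) * (Y - X) * (S⁻¹ * S) by noncomm_ring, hSinv, hSinv']
    simp
  have hdetY : Y.det = X.det * (1 + S⁻¹ * (Y - X) * S⁻¹).det := by
    conv_lhs => rw [hfact]
    rw [det_mul, det_mul, mul_right_comm, ← det_mul, hSS]
  rw [hdetY]
  have h1 := my_one_lt_det_one_add hm hK
  nlinarith [hX.det_pos]

set_option maxHeartbeats 1000000 in
/-- The ratio `det(F P Fᵀ + Q) / det(P)` is strictly decreasing in `P`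
with respect to the Loewner order: if `P₁ ≻ P₂ ≻ 0`, then
`det(F P₁ Fᵀ + Q) / det(P₁) < det(F P₂ Fᵀ + Q) / det(P₂)`. -/
theorem det_lyapunov_ratio_strict_anti {m : ℕ} (hm : 0 < m)
    (Q F P₁ P₂ : Matrix (Fin m) (Fin m) ℝ)
    (hQ : Q.PosDef) (hP₁ : P₁.IsHermitian) (hP₂ : P₂.PosDef)
    (h12 : (P₁ - P₂).PosDef) :
    (F * P₁ * Fᵀ + Q).det / P₁.det < (F * P₂ * Fᵀ + Q).det / P₂.det := by
  have hFt : Fᴴ = Fᵀ := conjTranspose_eq_transpose_of_trivial F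
  set A := F * P₂ * Fᵀ + Q with hAdef
  have hA : A.PosDef := by
    have h := (hP₂.posSemidef.mul_mul_conjTranspose_same F)
    rw [hFt] at h
    exact Matrix.PosDef.posSemidef_add h hQ
  -- invertibility facts
  have hP₂det : IsUnit P₂.det := hP₂.det_pos.ne'.isUnit
  have hQdet : IsUnit Q.det := hQ.det_pos.ne'.isUnit
  have hAdet : IsUnit A.det := hA.det_pos.ne'.isUnit
  have e1 : P₂⁻¹ * P₂ = 1 := nonsing_inv_mul _ hP₂det
  have e1' : P₂ * P₂⁻¹ = 1 := mul_nonsing_inv _ hP₂det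
  have eQ : Q⁻¹ * Q = 1 := nonsing_inv_mul _ hQdet
  have eA' : A * A⁻¹ = 1 := mul_nonsing_inv _ hAdet
  -- the Schur-complement-type matrix X is positive definite
  set G := P₂⁻¹ + Fᵀ * Q⁻¹ * F with hGdef
  have hG : G.PosDef := by
    have h := (hQ.inv.posSemidef.conjTranspose_mul_mul_same F)
    rw [hFt] at h
    exact hP₂.inv.add_posSemidef h
  set B := A⁻¹ * (F * P₂) with hBdef
  have eAB : A * B = F * P₂ := by
    rw [hBdef, ← mul_assoc, eA', one_mul]
  have eA : F * P₂ * Fᵀ = A - Q := by rw [hAdef, add_sub_cancel_right]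
  have key : G * (P₂ - P₂ * Fᵀ * B) = 1 := by
    calc G * (P₂ - P₂ * Fᵀ * B)
        = P₂⁻¹ * P₂ + Fᵀ * Q⁻¹ * (F * P₂) - P₂⁻¹ * P₂ * (Fᵀ * B)
          - Fᵀ * Q⁻¹ * ((F * P₂ * Fᵀ) * B) := by rw [hGdef]; noncomm_ring
      _ = 1 + Fᵀ * Q⁻¹ * (A * B) - Fᵀ * B - Fᵀ * Q⁻¹ * ((A - Q) * B) := by
          rw [eA, ← eAB, e1]; noncomm_ring
      _ = 1 + Fᵀ * ((Q⁻¹ * Q) * B) - Fᵀ * B := by noncomm_ring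
      _ = 1 := by rw [eQ]; noncomm_ring
  have hGinv : P₂ - P₂ * Fᵀ * B = G⁻¹ := (inv_eq_right_inv key).symm
  have hXPD : (P₂⁻¹ - Fᵀ * A⁻¹ * F).PosDef := by
    have hconj : (P₂⁻¹ᴴ * (P₂ - P₂ * Fᵀ * B) * P₂⁻¹).PosDef := by
      refine my_posdef_conj ?_ (isUnit_nonsing_inv_det _ hP₂det)
      rw [hGinv]; exact hG.inv
    have heq : P₂⁻¹ᴴ * (P₂ - P₂ * Fᵀ * B) * P₂⁻¹ = P₂⁻¹ - Fᵀ * A⁻¹ * F := by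
      rw [conjTranspose_nonsing_inv, hP₂.1.eq]
      calc P₂⁻¹ * (P₂ - P₂ * Fᵀ * B) * P₂⁻¹
          = (P₂⁻¹ * P₂) * P₂⁻¹
            - (P₂⁻¹ * P₂) * (Fᵀ * (A⁻¹ * (F * (P₂ * P₂⁻¹)))) := by
            rw [hBdef]; noncomm_ring
        _ = P₂⁻¹ - Fᵀ * A⁻¹ * F := by rw [e1, e1']; noncomm_ring
    rwa [heq] at hconj
  -- square root of D = P₁ - P₂
  set D := P₁ - P₂ with hDdef
  set S := CFC.sqrt D with hSdef
  have hSsemi : S.PosSemidef := (CFC.sqrt_nonneg D).posSemidef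
  have hSS : S * S = D := CFC.sqrt_mul_sqrt_self D h12.posSemidef.nonneg
  have hSdet : IsUnit S.det := by
    have h : S.det * S.det = D.det := by rw [← det_mul, hSS]
    have := h12.det_pos
    exact isUnit_iff_ne_zero.2 (by nlinarith)
  set M := S * (Fᵀ * A⁻¹ * F) * S with hMdef
  set N := S * P₂⁻¹ * S with hNdef
  have hMpsd : M.PosSemidef := by
    have h := (hA.inv.posSemidef.conjTranspose_mul_mul_same F)
    rw [hFt] at h
    have h2 := h.conjTranspose_mul_mul_same S
    rwa [hSsemi.1.eq] at h2
  have hNpsd : N.PosSemidef := by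
    have h2 := hP₂.inv.posSemidef.conjTranspose_mul_mul_same S
    rwa [hSsemi.1.eq] at h2
  have h1M : (1 + M).PosDef := Matrix.PosDef.add_posSemidef Matrix.PosDef.one hMpsd
  have h1N : (1 + N).PosDef := Matrix.PosDef.add_posSemidef Matrix.PosDef.one hNpsd
  have hNM : ((1 + N) - (1 + M)).PosDef := by
    have hconj := my_posdef_conj hXPD hSdet
    rw [hSsemi.1.eq] at hconj
    have heq : S * (P₂⁻¹ - Fᵀ * A⁻¹ * F) * S = (1 + N) - (1 + M) := by
      rw [hNdef, hMdef]; noncomm_ring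
    rwa [heq] at hconj
  have hdetlt : (1 + M).det < (1 + N).det := my_det_lt_det hm h1M hNM
  -- determinant factorizations
  have hP1 : P₁ = P₂ + D := by rw [hDdef]; noncomm_ring
  have hdet1 : (F * P₁ * Fᵀ + Q).det = A.det * (1 + M).det := by
    have hfact : F * P₁ * Fᵀ + Q = A * (1 + A⁻¹ * ((F * S) * (S * Fᵀ))) := by
      calc F * P₁ * Fᵀ + Q = A + (F * (S * S)) * Fᵀ := by
            rw [hSS, hP1, hAdef]; noncomm_ring
        _ = A * 1 + (A * A⁻¹) * ((F * S) * (S * Fᵀ)) := by rw [eA']; noncomm_ring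
        _ = A * (1 + A⁻¹ * ((F * S) * (S * Fᵀ))) := by noncomm_ring
    rw [hfact, det_mul]
    congr 1
    rw [show A⁻¹ * ((F * S) * (S * Fᵀ)) = (A⁻¹ * (F * S)) * (S * Fᵀ) by noncomm_ring,
      det_one_add_mul_comm]
    congr 1
    rw [hMdef]; noncomm_ring
  have hdet2 : P₁.det = P₂.det * (1 + N).det := by
    have hfact : P₁ = P₂ * (1 + (P₂⁻¹ * S) * S) := by
      calc P₁ = P₂ * 1 + (P₂ * P₂⁻¹) * (S * S) := by rw [e1', hSS, hP1]; noncomm_ring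
        _ = P₂ * (1 + (P₂⁻¹ * S) * S) := by noncomm_ring
    rw [hfact, det_mul]
    congr 1
    rw [det_one_add_mul_comm]
    congr 1
    rw [hNdef]; noncomm_ring
  rw [hdet1, hdet2]
  have hp2 : (0:ℝ) < P₂.det := hP₂.det_pos
  have ha : (0:ℝ) < A.det := hA.det_pos
  have hm1 : (0:ℝ) < (1 + M).det := h1M.det_pos
  have hn1 : (0:ℝ) < (1 + N).det := h1N.det_pos
  rw [div_lt_div_iff₀ (by positivity) hp2]
  have h := mul_lt_mul_of_pos_left hdetlt (mul_pos ha hp2)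
  nlinarith [h]
end

section
/- Let P and Q be m×m real symmetric positive definite matrices, R a p×p real symmetric positive definite matrix, F an m×m real matrix and H a p×m real matrix. Then det(F P Fᵀ − F P Hᵀ (H P Hᵀ + R)⁻¹ H P Fᵀ + Q) / det(P) = det(Q) · det(R) · det(P⁻¹ + Hᵀ R⁻¹ H + Fᵀ Q⁻¹ F) / det(R + H P Hᵀ). -/
open Matrix

/-- For symmetric positive definite `P`, `Q`, `R` and arbitrary `F`, `H`:
`det(F P Fᵀ − F P Hᵀ (H P Hᵀ + R)⁻¹ H P Fᵀ + Q) / det(P)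
  = det(Q) det(R) det(P⁻¹ + Hᵀ R⁻¹ H + Fᵀ Q⁻¹ F) / det(R + H P Hᵀ)`. -/
theorem det_riccati_ratio {m p : ℕ}
    (P Q F : Matrix (Fin m) (Fin m) ℝ)
    (R : Matrix (Fin p) (Fin p) ℝ) (H : Matrix (Fin p) (Fin m) ℝ)
    (hP : P.PosDef) (hQ : Q.PosDef) (hR : R.PosDef) :
    (F * P * Fᵀ - F * P * Hᵀ * (H * P * Hᵀ + R)⁻¹ * H * P * Fᵀ + Q).det / P.det
      = Q.det * R.det * (P⁻¹ + Hᵀ * R⁻¹ * H + Fᵀ * Q⁻¹ * F).det / (R + H * P * Hᵀ).det := by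
  have hPi : P⁻¹.PosDef := hP.inv
  have hRi : R⁻¹.PosDef := hR.inv
  -- the "information matrix" M
  set M : Matrix (Fin m) (Fin m) ℝ := P⁻¹ + Hᵀ * R⁻¹ * H with hMdef
  have hHRH : (Hᵀ * R⁻¹ * H).PosSemidef := by
    have := hRi.posSemidef.conjTranspose_mul_mul_same H
    simpa using this
  have hMpd : M.PosDef := hPi.add_posSemidef hHRH
  have hSpd : (R + H * P * Hᵀ).PosDef := by
    have hHPH : (H * P * Hᵀ).PosSemidef := by
      have := hP.posSemidef.mul_mul_conjTranspose_same H
      simpa using this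
    exact hR.add_posSemidef hHPH
  have hSpd' : (H * P * Hᵀ + R).PosDef := by rwa [add_comm] at hSpd
  -- units
  have hPu : IsUnit P.det := isUnit_iff_ne_zero.mpr hP.det_pos.ne'
  have hQu : IsUnit Q.det := isUnit_iff_ne_zero.mpr hQ.det_pos.ne'
  have hRu : IsUnit R.det := isUnit_iff_ne_zero.mpr hR.det_pos.ne'
  have hMu : IsUnit M.det := isUnit_iff_ne_zero.mpr hMpd.det_pos.ne'
  have hSu : IsUnit (R + H * P * Hᵀ).det := isUnit_iff_ne_zero.mpr hSpd.det_pos.ne'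
  have hPiP : (P⁻¹)⁻¹ = P := P.nonsing_inv_nonsing_inv hPu
  have hRiR : (R⁻¹)⁻¹ = R := R.nonsing_inv_nonsing_inv hRu
  -- Woodbury: M⁻¹ = P - P Hᵀ (H P Hᵀ + R)⁻¹ H P
  have hwood : M⁻¹ = P - P * Hᵀ * (H * P * Hᵀ + R)⁻¹ * H * P := by
    have := Matrix.add_mul_mul_inv_eq_sub (A := P⁻¹) (U := Hᵀ) (C := R⁻¹) (V := H)
      ((isUnit_iff_isUnit_det _).mpr (isUnit_iff_ne_zero.mpr hPi.det_pos.ne'))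
      ((isUnit_iff_isUnit_det _).mpr (isUnit_iff_ne_zero.mpr hRi.det_pos.ne'))
      (by
        rw [hRiR, hPiP]
        exact (isUnit_iff_isUnit_det _).mpr (isUnit_iff_ne_zero.mpr
          (by rw [add_comm]; exact hSpd'.det_pos.ne')))
    rw [hRiR, hPiP] at this
    rw [hMdef, this, add_comm (H * P * Hᵀ) R]
  -- rewrite the numerator
  have hnum : F * P * Fᵀ - F * P * Hᵀ * (H * P * Hᵀ + R)⁻¹ * H * P * Fᵀ + Q
      = Q + F * (M⁻¹ * Fᵀ) := by
    rw [hwood]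
    simp only [Matrix.mul_sub, Matrix.sub_mul, Matrix.mul_assoc]
    abel
  -- determinant of the numerator
  have hdetnum : (F * P * Fᵀ - F * P * Hᵀ * (H * P * Hᵀ + R)⁻¹ * H * P * Fᵀ + Q).det
      = Q.det * (M.det)⁻¹ * (M + Fᵀ * Q⁻¹ * F).det := by
    rw [hnum, det_add_mul _ _ hQu]
    have : (1 : Matrix (Fin m) (Fin m) ℝ) + M⁻¹ * Fᵀ * Q⁻¹ * F
        = M⁻¹ * (M + Fᵀ * Q⁻¹ * F) := by
      rw [Matrix.mul_add, M.nonsing_inv_mul hMu]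
      noncomm_ring
    rw [this, det_mul, M.det_nonsing_inv, Ring.inverse_eq_inv]
    ring
  -- determinant of M
  have hdetM : M.det = (P.det)⁻¹ * (R.det)⁻¹ * (R + H * P * Hᵀ).det := by
    have h1 : M = P⁻¹ + Hᵀ * (R⁻¹ * H) := by rw [hMdef, Matrix.mul_assoc]
    have hPiu : IsUnit (P⁻¹).det := isUnit_iff_ne_zero.mpr hPi.det_pos.ne'
    rw [h1, det_add_mul _ _ hPiu, hPiP]
    have : (1 : Matrix (Fin p) (Fin p) ℝ) + R⁻¹ * H * P * Hᵀ
        = R⁻¹ * (R + H * P * Hᵀ) := by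
      rw [Matrix.mul_add, R.nonsing_inv_mul hRu, Matrix.mul_assoc R⁻¹ H P,
        Matrix.mul_assoc R⁻¹ (H * P) Hᵀ]
    rw [this, det_mul,
      P.det_nonsing_inv, R.det_nonsing_inv, Ring.inverse_eq_inv, Ring.inverse_eq_inv]
    ring
  -- put it together
  have h2 : P⁻¹ + Hᵀ * R⁻¹ * H + Fᵀ * Q⁻¹ * F = M + Fᵀ * Q⁻¹ * F := by rw [hMdef]
  rw [hdetnum, hdetM, h2]
  have hp0 : P.det ≠ 0 := hP.det_pos.ne'
  have hr0 : R.det ≠ 0 := hR.det_pos.ne'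
  have hs0 : (R + H * P * Hᵀ).det ≠ 0 := hSpd.det_pos.ne'
  field_simp
end

section
/- Let Q be an m×m real symmetric positive definite matrix, R a p×p real symmetric positive definite matrix, F an m×m real matrix and H a p×m real matrix. Let P₁, P₂ be m×m real symmetric matrices with P₁ ≻ P₂ ≻ 0. Then det(F P₁ Fᵀ − F P₁ Hᵀ (H P₁ Hᵀ + R)⁻¹ H P₁ Fᵀ + Q) / det(P₁) < det(F P₂ Fᵀ − F P₂ Hᵀ (H P₂ Hᵀ + R)⁻¹ H P₂ Fᵀ + Q) / det(P₂). In other words, the ratio det(R₁(P))/det(P) for the Riccati update R₁(P) = F P Fᵀ + Q − F P Hᵀ (H P Hᵀ + R)⁻¹ H P Fᵀ is strictly decreasing in P with respect to the Loewner order. -/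
open Matrix

namespace RicAux
variable {n : Type*} [Fintype n] [DecidableEq n]

lemma det_one_add_posSemidef {S : Matrix n n ℝ} (hS : S.PosSemidef) : 1 ≤ (1 + S).det := by
  have hH := hS.isHermitian
  set U : Matrix n n ℝ := (hH.eigenvectorUnitary : Matrix n n ℝ)
  set D : Matrix n n ℝ := diagonal (RCLike.ofReal ∘ hH.eigenvalues)
  have hu : U * star U = 1 := (Matrix.mem_unitaryGroup_iff).mp hH.eigenvectorUnitary.2
  have h1 : 1 + S = U * (1 + D) * star U := by
    calc 1 + S = U * star U + U * D * star U := by rw [hu]; congr 1; exact hH.spectral_theorem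
    _ = U * (1 + D) * star U := by noncomm_ring
  have hdu : U.det * (star U).det = 1 := by rw [← det_mul, hu, det_one]
  rw [h1, det_mul, det_mul,
    show U.det * (1 + D).det * (star U).det = (U.det * (star U).det) * (1 + D).det from by ring,
    hdu, one_mul]
  have hD : (1 + D).det = ∏ i, (1 + hH.eigenvalues i) := by
    simp [D, ← diagonal_one, diagonal_add, det_diagonal]
  rw [hD]
  calc (1:ℝ) = ∏ _i : n, 1 := by simp
  _ ≤ ∏ i, (1 + hH.eigenvalues i) :=
      Finset.prod_le_prod (by simp) (fun i _ => by linarith [hS.eigenvalues_nonneg i])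
variable {n : Type*} [Fintype n] [DecidableEq n]

lemma det_one_add_posDef [Nonempty n] {S : Matrix n n ℝ} (hS : S.PosDef) : 1 < (1 + S).det := by
  have hH := hS.isHermitian
  set U : Matrix n n ℝ := (hH.eigenvectorUnitary : Matrix n n ℝ)
  set D : Matrix n n ℝ := diagonal (RCLike.ofReal ∘ hH.eigenvalues)
  have hu : U * star U = 1 := (Matrix.mem_unitaryGroup_iff).mp hH.eigenvectorUnitary.2
  have h1 : 1 + S = U * (1 + D) * star U := by
    calc 1 + S = U * star U + U * D * star U := by rw [hu]; congr 1; exact hH.spectral_theorem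
    _ = U * (1 + D) * star U := by noncomm_ring
  have hdu : U.det * (star U).det = 1 := by rw [← det_mul, hu, det_one]
  rw [h1, det_mul, det_mul,
    show U.det * (1 + D).det * (star U).det = (U.det * (star U).det) * (1 + D).det from by ring,
    hdu, one_mul]
  have hD : (1 + D).det = ∏ i, (1 + hH.eigenvalues i) := by
    simp [D, ← diagonal_one, diagonal_add, det_diagonal]
  rw [hD]
  calc (1:ℝ) = ∏ _i : n, 1 := by simp
  _ < ∏ i, (1 + hH.eigenvalues i) := by
      apply Finset.prod_lt_prod_of_nonempty (by simp)
        (fun i _ => by linarith [hS.eigenvalues_pos i]) Finset.univ_nonempty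

lemma posDef_mul_mul_conjTranspose {A B : Matrix n n ℝ} (hA : A.PosDef) (hB : IsUnit B.det) :
    (B * A * Bᴴ).PosDef := by
  refine PosDef.of_dotProduct_mulVec_pos (isHermitian_mul_mul_conjTranspose _ hA.isHermitian) fun x hx => ?_
  have hBH : IsUnit (Bᴴ).det := by
    rwa [det_conjTranspose, isUnit_iff_ne_zero, star_ne_zero, ← isUnit_iff_ne_zero]
  have hy : Bᴴ *ᵥ x ≠ 0 := by
    intro h
    apply hx
    have h2 : (Bᴴ)⁻¹ *ᵥ (Bᴴ *ᵥ x) = (Bᴴ)⁻¹ *ᵥ 0 := by rw [h]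
    rwa [mulVec_mulVec, nonsing_inv_mul _ hBH, one_mulVec, mulVec_zero] at h2
  have := hA.dotProduct_mulVec_pos hy
  calc (0:ℝ) < star (Bᴴ *ᵥ x) ⬝ᵥ (A *ᵥ (Bᴴ *ᵥ x)) := this
  _ = star x ⬝ᵥ (B * A * Bᴴ) *ᵥ x := by
      rw [star_mulVec, conjTranspose_conjTranspose, ← dotProduct_mulVec,
        mulVec_mulVec, mulVec_mulVec]
variable {n : Type*} [Fintype n] [DecidableEq n]


lemma inv_sub_inv_eq {A S : Matrix n n ℝ} (hA : IsUnit A.det) (hAS : IsUnit (A + S).det) :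
    A⁻¹ - (A + S)⁻¹ = (A + S)⁻¹ * (S + S * A⁻¹ * S) * (A + S)⁻¹ := by
  have h1 : A * A⁻¹ = 1 := mul_nonsing_inv _ hA
  have h2 : A⁻¹ * A = 1 := nonsing_inv_mul _ hA
  have h3 : (A + S) * (A + S)⁻¹ = 1 := mul_nonsing_inv _ hAS
  have h4 : (A + S)⁻¹ * (A + S) = 1 := nonsing_inv_mul _ hAS
  have key : (A + S) * A⁻¹ * (A + S) - (A + S) = S + S * A⁻¹ * S := by
    have key' : (A + S) * A⁻¹ * (A + S) = A + S + (S + S * A⁻¹ * S) := by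
      calc (A + S) * A⁻¹ * (A + S) = (1 + S * A⁻¹) * (A + S) := by rw [Matrix.add_mul, h1]
      _ = A + S + (S * A⁻¹ * A + S * A⁻¹ * S) := by noncomm_ring
      _ = A + S + (S + S * A⁻¹ * S) := by rw [Matrix.mul_assoc S A⁻¹ A, h2, Matrix.mul_one]
    rw [key']; abel
  have first : (A + S)⁻¹ * ((A + S) * A⁻¹ * (A + S)) * (A + S)⁻¹ = A⁻¹ := by
    calc (A + S)⁻¹ * ((A + S) * A⁻¹ * (A + S)) * (A + S)⁻¹
        = ((A + S)⁻¹ * (A + S)) * A⁻¹ * ((A + S) * (A + S)⁻¹) := by noncomm_ring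
    _ = A⁻¹ := by rw [h4, h3, Matrix.one_mul, Matrix.mul_one]
  have second : (A + S)⁻¹ * (A + S) * (A + S)⁻¹ = (A + S)⁻¹ := by
    rw [h4, Matrix.one_mul]
  calc A⁻¹ - (A + S)⁻¹
      = (A + S)⁻¹ * ((A + S) * A⁻¹ * (A + S) - (A + S)) * (A + S)⁻¹ := by
        simp only [Matrix.mul_sub, Matrix.sub_mul]
        rw [first, second]
  _ = (A + S)⁻¹ * (S + S * A⁻¹ * S) * (A + S)⁻¹ := by rw [key]

lemma posSemidef_inv_sub_inv {A S : Matrix n n ℝ} (hA : A.PosDef) (hS : S.PosSemidef) :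
    (A⁻¹ - (A + S)⁻¹).PosSemidef := by
  have hAS : (A + S).PosDef := hA.add_posSemidef hS
  rw [inv_sub_inv_eq (isUnit_iff_ne_zero.mpr hA.det_pos.ne') (isUnit_iff_ne_zero.mpr hAS.det_pos.ne')]
  have hmid : (S + S * A⁻¹ * S).PosSemidef := by
    refine hS.add ?_
    have := hA.inv.posSemidef.conjTranspose_mul_mul_same S
    rwa [hS.isHermitian.eq] at this
  have := hmid.mul_mul_conjTranspose_same (A + S)⁻¹
  rwa [(hAS.inv.isHermitian).eq] at this

lemma posDef_inv_sub_inv {A S : Matrix n n ℝ} (hA : A.PosDef) (hS : S.PosDef) :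
    (A⁻¹ - (A + S)⁻¹).PosDef := by
  have hAS : (A + S).PosDef := hA.add hS
  rw [inv_sub_inv_eq (isUnit_iff_ne_zero.mpr hA.det_pos.ne') (isUnit_iff_ne_zero.mpr hAS.det_pos.ne')]
  have hmid : (S + S * A⁻¹ * S).PosDef := by
    refine hS.add_posSemidef ?_
    have := hA.inv.posSemidef.conjTranspose_mul_mul_same S
    rwa [hS.isHermitian.eq] at this
  have := posDef_mul_mul_conjTranspose (B := (A + S)⁻¹) hmid
    (isUnit_iff_ne_zero.mpr hAS.inv.det_pos.ne')
  rwa [(hAS.inv.isHermitian).eq] at this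

lemma det_le_det_add {A S : Matrix n n ℝ} (hA : A.PosDef) (hS : S.PosSemidef) :
    A.det ≤ (A + S).det := by
  set B : Matrix n n ℝ := (open scoped MatrixOrder in CFC.sqrt _) with hBdef
  have hBB : B * B = A := by
    open scoped MatrixOrder in exact CFC.sqrt_mul_sqrt_self _ hA.posSemidef.nonneg
  have hBH : B.IsHermitian := by
    open scoped MatrixOrder in exact (CFC.sqrt_nonneg _).posSemidef.isHermitian
  have hdetB : B.det * B.det = A.det := by rw [← det_mul, hBB]
  have hBu : IsUnit B.det := by
    refine isUnit_iff_ne_zero.mpr fun h => ?_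
    rw [h, mul_zero] at hdetB
    exact hA.det_pos.ne' hdetB.symm
  have h1 : B⁻¹ * B = 1 := nonsing_inv_mul _ hBu
  have h2 : B * B⁻¹ = 1 := mul_nonsing_inv _ hBu
  have key : A + S = B * (1 + B⁻¹ * S * B⁻¹) * B := by
    calc A + S = B * B + (B * B⁻¹) * S * (B⁻¹ * B) := by
          rw [hBB, h2, h1, Matrix.one_mul, Matrix.mul_one]
    _ = B * (1 + B⁻¹ * S * B⁻¹) * B := by noncomm_ring
  have hT : (B⁻¹ * S * B⁻¹).PosSemidef := by
    have := hS.mul_mul_conjTranspose_same B⁻¹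
    rwa [show (B⁻¹)ᴴ = B⁻¹ from (hBH.inv).eq] at this
  calc A.det = A.det * 1 := by ring
  _ ≤ A.det * (1 + B⁻¹ * S * B⁻¹).det :=
      mul_le_mul_of_nonneg_left (det_one_add_posSemidef hT) hA.det_pos.le
  _ = (A + S).det := by rw [key, det_mul, det_mul, ← hdetB]; ring

lemma det_add_sq {W : Matrix n n ℝ} (hW : W.PosDef) (B : Matrix n n ℝ) :
    (W + B * B).det = W.det * (1 + B * (W⁻¹ * B)).det := by
  have h2 : W * W⁻¹ = 1 := mul_nonsing_inv _ (isUnit_iff_ne_zero.mpr hW.det_pos.ne')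
  have key : W + B * B = W * (1 + (W⁻¹ * B) * B) := by
    simp only [Matrix.mul_add, Matrix.mul_one]
    rw [← Matrix.mul_assoc, ← Matrix.mul_assoc, h2, Matrix.one_mul]
  rw [key, det_mul, det_one_add_mul_comm]
variable {n : Type*} [Fintype n] [DecidableEq n]

lemma riccati_det {m p : ℕ} (Q F : Matrix (Fin m) (Fin m) ℝ) (R : Matrix (Fin p) (Fin p) ℝ)
    (H : Matrix (Fin p) (Fin m) ℝ) (hQ : Q.PosDef) (hR : R.PosDef)
    {P : Matrix (Fin m) (Fin m) ℝ} (hP : P.PosDef) :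
    (F * P * Fᵀ - F * P * Hᵀ * (H * P * Hᵀ + R)⁻¹ * H * P * Fᵀ + Q).det =
      Q.det * (P⁻¹ + Hᵀ * R⁻¹ * H + Fᵀ * Q⁻¹ * F).det / (P⁻¹ + Hᵀ * R⁻¹ * H).det := by
  have hPinv : (P⁻¹)⁻¹ = P := nonsing_inv_nonsing_inv _ (isUnit_iff_ne_zero.mpr hP.det_pos.ne')
  have hRinv : (R⁻¹)⁻¹ = R := nonsing_inv_nonsing_inv _ (isUnit_iff_ne_zero.mpr hR.det_pos.ne')
  have hHPH : (H * P * Hᵀ).PosSemidef := by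
    have := hP.posSemidef.mul_mul_conjTranspose_same H
    rwa [conjTranspose_eq_transpose_of_trivial] at this
  have hRHPH : (R + H * P * Hᵀ).PosDef := hR.add_posSemidef hHPH
  have hAC : IsUnit ((R⁻¹)⁻¹ + H * (P⁻¹)⁻¹ * Hᵀ) := by
    rw [hPinv, hRinv]; exact hRHPH.isUnit
  have hw := Matrix.add_mul_mul_inv_eq_sub (P⁻¹) Hᵀ (R⁻¹) H hP.inv.isUnit hR.inv.isUnit hAC
  rw [hPinv, hRinv, add_comm R (H * P * Hᵀ)] at hw
  have hmain : F * P * Fᵀ - F * P * Hᵀ * (H * P * Hᵀ + R)⁻¹ * H * P * Fᵀ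
      = F * (P⁻¹ + Hᵀ * R⁻¹ * H)⁻¹ * Fᵀ := by
    rw [hw]
    simp only [Matrix.mul_sub, Matrix.sub_mul, Matrix.mul_assoc]
  rw [hmain]
  set G : Matrix (Fin m) (Fin m) ℝ := P⁻¹ + Hᵀ * R⁻¹ * H with hGdef
  have hM : (Hᵀ * R⁻¹ * H).PosSemidef := by
    have := hR.inv.posSemidef.conjTranspose_mul_mul_same H
    rwa [conjTranspose_eq_transpose_of_trivial] at this
  have hG : G.PosDef := hP.inv.add_posSemidef hM
  have hGS : G * G⁻¹ = 1 := mul_nonsing_inv _ (isUnit_iff_ne_zero.mpr hG.det_pos.ne')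
  have hQQ : Q * Q⁻¹ = 1 := mul_nonsing_inv _ (isUnit_iff_ne_zero.mpr hQ.det_pos.ne')
  have key2 : F * G⁻¹ * Fᵀ + Q = Q * (1 + (Q⁻¹ * F * G⁻¹) * Fᵀ) := by
    calc F * G⁻¹ * Fᵀ + Q = (Q * Q⁻¹) * (F * G⁻¹ * Fᵀ) + Q := by
          rw [hQQ, Matrix.one_mul]
    _ = Q * (1 + (Q⁻¹ * F * G⁻¹) * Fᵀ) := by noncomm_ring
  have key3 : 1 + Fᵀ * (Q⁻¹ * F * G⁻¹) = (G + Fᵀ * Q⁻¹ * F) * G⁻¹ := by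
    rw [Matrix.add_mul, hGS]
    simp only [Matrix.mul_assoc]
  have hdetGinv : (G⁻¹).det = G.det⁻¹ := by
    rw [det_nonsing_inv, Ring.inverse_eq_inv']
  rw [key2, det_mul, det_one_add_mul_comm, key3, det_mul, hdetGinv, hGdef]
  rw [div_eq_mul_inv]; ring

end RicAux

open RicAux in
/-- The ratio `det(R₁(P)) / det(P)` for the Riccati update
`R₁(P) = F P Fᵀ + Q − F P Hᵀ (H P Hᵀ + R)⁻¹ H P Fᵀ` is strictly decreasing in `P`
with respect to the Loewner order. -/
theorem det_riccati_ratio_strict_anti {m p : ℕ} (hm : 0 < m)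
    (Q F P₁ P₂ : Matrix (Fin m) (Fin m) ℝ)
    (R : Matrix (Fin p) (Fin p) ℝ) (H : Matrix (Fin p) (Fin m) ℝ)
    (hQ : Q.PosDef) (hR : R.PosDef)
    (hP₁ : P₁.IsHermitian) (hP₂ : P₂.PosDef) (h12 : (P₁ - P₂).PosDef) :
    (F * P₁ * Fᵀ - F * P₁ * Hᵀ * (H * P₁ * Hᵀ + R)⁻¹ * H * P₁ * Fᵀ + Q).det / P₁.det
      < (F * P₂ * Fᵀ - F * P₂ * Hᵀ * (H * P₂ * Hᵀ + R)⁻¹ * H * P₂ * Fᵀ + Q).det / P₂.det := by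
  haveI : Nonempty (Fin m) := ⟨⟨0, hm⟩⟩
  have hP₁' : P₁.PosDef := by
    have := h12.add hP₂
    rwa [sub_add_cancel] at this
  rw [riccati_det Q F R H hQ hR hP₁', riccati_det Q F R H hQ hR hP₂]
  -- notation
  have hM : (Hᵀ * R⁻¹ * H).PosSemidef := by
    have := hR.inv.posSemidef.conjTranspose_mul_mul_same H
    rwa [conjTranspose_eq_transpose_of_trivial] at this
  have hN : (Fᵀ * Q⁻¹ * F).PosSemidef := by
    have := hQ.inv.posSemidef.conjTranspose_mul_mul_same F
    rwa [conjTranspose_eq_transpose_of_trivial] at this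
  set M : Matrix (Fin m) (Fin m) ℝ := Hᵀ * R⁻¹ * H
  set N : Matrix (Fin m) (Fin m) ℝ := Fᵀ * Q⁻¹ * F
  set X₁ : Matrix (Fin m) (Fin m) ℝ := P₁⁻¹ with hX₁
  set X₂ : Matrix (Fin m) (Fin m) ℝ := P₂⁻¹ with hX₂
  have hW0 : X₁.PosDef := hP₁'.inv
  have hW1 : (X₁ + M).PosDef := hW0.add_posSemidef hM
  have hW2 : (X₁ + M + N).PosDef := hW1.add_posSemidef hN
  -- D := X₂ - X₁ is positive definite
  have hD : (X₂ - X₁).PosDef := by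
    have := posDef_inv_sub_inv hP₂ h12
    rwa [show P₂ + (P₁ - P₂) = P₁ from by abel] at this
  set B : Matrix (Fin m) (Fin m) ℝ := (open scoped MatrixOrder in CFC.sqrt _) with hBdef
  have hBB : B * B = X₂ - X₁ := by
    open scoped MatrixOrder in exact CFC.sqrt_mul_sqrt_self _ hD.posSemidef.nonneg
  have hBH : B.IsHermitian := by
    open scoped MatrixOrder in exact (CFC.sqrt_nonneg _).posSemidef.isHermitian
  have hdetB : B.det * B.det = (X₂ - X₁).det := by rw [← det_mul, hBB]
  have hBu : IsUnit B.det := by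
    refine isUnit_iff_ne_zero.mpr fun h => ?_
    rw [h, mul_zero] at hdetB
    exact hD.det_pos.ne' hdetB.symm
  -- determinant factorizations
  have e0 : X₂.det = X₁.det * (1 + B * X₁⁻¹ * B).det := by
    rw [show X₂ = X₁ + B * B from by rw [hBB]; abel, det_add_sq hW0 B, Matrix.mul_assoc]
  have e1 : (X₂ + M).det = (X₁ + M).det * (1 + B * (X₁ + M)⁻¹ * B).det := by
    rw [show X₂ + M = (X₁ + M) + B * B from by rw [hBB]; abel, det_add_sq hW1 B,
      Matrix.mul_assoc]
  have e2 : (X₂ + M + N).det = (X₁ + M + N).det * (1 + B * (X₁ + M + N)⁻¹ * B).det := by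
    rw [show X₂ + M + N = (X₁ + M + N) + B * B from by rw [hBB]; abel, det_add_sq hW2 B,
      Matrix.mul_assoc]
  set d₀ : ℝ := (1 + B * X₁⁻¹ * B).det
  set d₁ : ℝ := (1 + B * (X₁ + M)⁻¹ * B).det
  set d₂ : ℝ := (1 + B * (X₁ + M + N)⁻¹ * B).det
  -- facts about d₀, d₁, d₂
  have hK₁ : (B * (X₁ + M)⁻¹ * B).PosSemidef := by
    have := hW1.inv.posSemidef.mul_mul_conjTranspose_same B
    rwa [hBH.eq] at this
  have f1 : (1 + B * (X₁ + M)⁻¹ * B).PosDef := Matrix.PosDef.one.add_posSemidef hK₁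
  have hd₁pos : 0 < d₁ := f1.det_pos
  have f2 : d₁ ≤ d₀ := by
    have hSpsd : (B * (X₁⁻¹ - (X₁ + M)⁻¹) * B).PosSemidef := by
      have := (posSemidef_inv_sub_inv hW0 hM).mul_mul_conjTranspose_same B
      rwa [hBH.eq] at this
    have hsum : (1 + B * (X₁ + M)⁻¹ * B) + B * (X₁⁻¹ - (X₁ + M)⁻¹) * B
        = 1 + B * X₁⁻¹ * B := by
      simp only [Matrix.mul_sub, Matrix.sub_mul]
      abel
    have := det_le_det_add f1 hSpsd
    rwa [hsum] at this
  have hd₀pos : 0 < d₀ := lt_of_lt_of_le hd₁pos f2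
  have f3 : 1 < d₂ := by
    apply det_one_add_posDef
    have := posDef_mul_mul_conjTranspose (B := B) hW2.inv hBu
    rwa [hBH.eq] at this
  -- relate determinants of P and P⁻¹
  have hp1 : P₁.det = X₁.det⁻¹ :=
    eq_inv_of_mul_eq_one_left (by
      rw [← det_mul, hX₁, mul_nonsing_inv _ (isUnit_iff_ne_zero.mpr hP₁'.det_pos.ne'), det_one])
  have hp2 : P₂.det = X₂.det⁻¹ :=
    eq_inv_of_mul_eq_one_left (by
      rw [← det_mul, hX₂, mul_nonsing_inv _ (isUnit_iff_ne_zero.mpr hP₂.det_pos.ne'), det_one])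
  -- final numeric computation
  have hq : 0 < Q.det := hQ.det_pos
  have hx₁ : 0 < X₁.det := hW0.det_pos
  have ha₁ : 0 < (X₁ + M).det := hW1.det_pos
  have hb₁ : 0 < (X₁ + M + N).det := hW2.det_pos
  rw [e1, e2, hp1, hp2, e0]
  rw [div_inv_eq_mul, div_inv_eq_mul, div_mul_eq_mul_div, div_mul_eq_mul_div,
    div_lt_div_iff₀ ha₁ (by positivity)]
  have hd : d₁ < d₂ * d₀ := by nlinarith
  nlinarith [mul_pos (mul_pos (mul_pos hq hb₁) hx₁) ha₁,
    mul_lt_mul_of_pos_left hd (mul_pos (mul_pos (mul_pos hq hb₁) hx₁) ha₁)]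
end

section
/- Let Q be an m×m real symmetric positive semidefinite matrix, R a p×p real symmetric positive definite matrix, F an m×m real matrix and H a p×m real matrix. The Lyapunov update L(P) = F P Fᵀ + Q and the Riccati update R₁(P) = F P Fᵀ + Q − F P Hᵀ (H P Hᵀ + R)⁻¹ H P Fᵀ are monotone operators with respect to the Loewner order on real symmetric positive semidefinite matrices: if P₁ ⪰ P₂ ⪰ 0, then L(P₁) ⪰ L(P₂) and R₁(P₁) ⪰ R₁(P₂). -/
open Matrix

lemma psd_add' {n : ℕ} {A B : Matrix (Fin n) (Fin n) ℝ}
    (hA : A.PosSemidef) (hB : B.PosSemidef) : (A + B).PosSemidef :=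
  hA.add hB

lemma psd_conj' {n k : ℕ} {A : Matrix (Fin n) (Fin n) ℝ}
    (hA : A.PosSemidef) (B : Matrix (Fin k) (Fin n) ℝ) :
    (B * A * Bᵀ).PosSemidef := by
  have h := hA.mul_mul_conjTranspose_same B
  rwa [conjTranspose_eq_transpose_of_trivial] at h

lemma key_identity {m p : ℕ}
    (P₁ P₂ : Matrix (Fin m) (Fin m) ℝ)
    (R : Matrix (Fin p) (Fin p) ℝ) (H : Matrix (Fin p) (Fin m) ℝ)
    (K₁ K₂ : Matrix (Fin m) (Fin p) ℝ)
    (k1 : K₁ * (H * P₁ * Hᵀ + R) = P₁ * Hᵀ)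
    (k2 : K₂ * (H * P₂ * Hᵀ + R) = P₂ * Hᵀ)
    (k1t : (H * P₁ * Hᵀ + R) * K₁ᵀ = H * P₁)
    (k2t : (H * P₂ * Hᵀ + R) * K₂ᵀ = H * P₂) :
    (P₁ - K₁ * (H * P₁)) - (P₂ - K₂ * (H * P₂)) =
      (1 - K₁ * H) * (P₁ - P₂) * (1 - K₁ * H)ᵀ
        + (K₁ - K₂) * (H * P₂ * Hᵀ + R) * (K₁ - K₂)ᵀ := by
  have f1 : ∀ {n : ℕ} (X : Matrix (Fin p) (Fin n) ℝ),
      K₁ * (H * (P₁ * (Hᵀ * X))) = P₁ * (Hᵀ * X) - K₁ * (R * X) := by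
    intro n X
    have h := congrArg (· * X) k1
    simp only [Matrix.add_mul, Matrix.mul_add, Matrix.mul_assoc] at h
    exact eq_sub_of_add_eq h
  have f2 : ∀ {n : ℕ} (X : Matrix (Fin p) (Fin n) ℝ),
      K₂ * (H * (P₂ * (Hᵀ * X))) = P₂ * (Hᵀ * X) - K₂ * (R * X) := by
    intro n X
    have h := congrArg (· * X) k2
    simp only [Matrix.add_mul, Matrix.mul_add, Matrix.mul_assoc] at h
    exact eq_sub_of_add_eq h
  have e1 : H * (P₁ * (Hᵀ * K₁ᵀ)) = H * P₁ - R * K₁ᵀ := by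
    have h := k1t
    simp only [Matrix.add_mul, Matrix.mul_assoc] at h
    exact eq_sub_of_add_eq h
  have e2 : H * (P₂ * (Hᵀ * K₂ᵀ)) = H * P₂ - R * K₂ᵀ := by
    have h := k2t
    simp only [Matrix.add_mul, Matrix.mul_assoc] at h
    exact eq_sub_of_add_eq h
  have e3 : P₁ * (Hᵀ * K₁ᵀ) = K₁ * (H * P₁) := by
    have h := f1 K₁ᵀ
    rw [e1, Matrix.mul_sub] at h
    exact (sub_left_inj.mp h).symm
  have e4 : P₂ * (Hᵀ * K₂ᵀ) = K₂ * (H * P₂) := by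
    have h := f2 K₂ᵀ
    rw [e2, Matrix.mul_sub] at h
    exact (sub_left_inj.mp h).symm
  have g1 : K₁ * (H * (K₁ * (H * P₁))) = K₁ * (H * P₁) - K₁ * (R * K₁ᵀ) := by
    calc K₁ * (H * (K₁ * (H * P₁))) = K₁ * (H * (P₁ * (Hᵀ * K₁ᵀ))) := by rw [e3]
      _ = P₁ * (Hᵀ * K₁ᵀ) - K₁ * (R * K₁ᵀ) := f1 _
      _ = K₁ * (H * P₁) - K₁ * (R * K₁ᵀ) := by rw [e3]
  have g12 : K₁ * (H * (K₂ * (H * P₂))) = K₁ * (H * P₂) - K₁ * (R * K₂ᵀ) := by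
    calc K₁ * (H * (K₂ * (H * P₂))) = K₁ * (H * (P₂ * (Hᵀ * K₂ᵀ))) := by rw [e4]
      _ = K₁ * (H * P₂ - R * K₂ᵀ) := by rw [e2]
      _ = K₁ * (H * P₂) - K₁ * (R * K₂ᵀ) := by rw [Matrix.mul_sub]
  have g2 : K₂ * (H * (K₂ * (H * P₂))) = K₂ * (H * P₂) - K₂ * (R * K₂ᵀ) := by
    calc K₂ * (H * (K₂ * (H * P₂))) = K₂ * (H * (P₂ * (Hᵀ * K₂ᵀ))) := by rw [e4]
      _ = P₂ * (Hᵀ * K₂ᵀ) - K₂ * (R * K₂ᵀ) := f2 _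
      _ = K₂ * (H * P₂) - K₂ * (R * K₂ᵀ) := by rw [e4]
  simp only [Matrix.sub_mul, Matrix.mul_sub, Matrix.add_mul, Matrix.mul_add,
    Matrix.one_mul, Matrix.mul_one, Matrix.transpose_sub, Matrix.transpose_mul,
    Matrix.transpose_one, Matrix.mul_assoc, f1, f2, e1, e2, e3, e4, g1, g12, g2]
  abel

/-- The Lyapunov update `L(P) = F P Fᵀ + Q` and the Riccati update
`R₁(P) = F P Fᵀ + Q − F P Hᵀ (H P Hᵀ + R)⁻¹ H P Fᵀ` are monotone with respect to
the Loewner order on positive semidefinite matrices: if `P₁ ⪰ P₂ ⪰ 0` then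
`L(P₁) ⪰ L(P₂)` and `R₁(P₁) ⪰ R₁(P₂)`. -/
theorem lyapunov_riccati_monotone {m p : ℕ}
    (Q F P₁ P₂ : Matrix (Fin m) (Fin m) ℝ)
    (R : Matrix (Fin p) (Fin p) ℝ) (H : Matrix (Fin p) (Fin m) ℝ)
    (hQ : Q.PosSemidef) (hR : R.PosDef)
    (hP₂ : P₂.PosSemidef) (h12 : (P₁ - P₂).PosSemidef) :
    ((F * P₁ * Fᵀ + Q) - (F * P₂ * Fᵀ + Q)).PosSemidef ∧
      ((F * P₁ * Fᵀ + Q - F * P₁ * Hᵀ * (H * P₁ * Hᵀ + R)⁻¹ * H * P₁ * Fᵀ)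
        - (F * P₂ * Fᵀ + Q - F * P₂ * Hᵀ * (H * P₂ * Hᵀ + R)⁻¹ * H * P₂ * Fᵀ)).PosSemidef := by
  have hP₁ : P₁.PosSemidef := by
    have := psd_add' hP₂ h12
    simpa using this
  have hS₁ : (H * P₁ * Hᵀ + R).PosDef :=
    Matrix.PosDef.posSemidef_add (psd_conj' hP₁ H) hR
  have hS₂ : (H * P₂ * Hᵀ + R).PosDef :=
    Matrix.PosDef.posSemidef_add (psd_conj' hP₂ H) hR
  have hd₁ : IsUnit (H * P₁ * Hᵀ + R).det := (Matrix.isUnit_iff_isUnit_det _).mp hS₁.isUnit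
  have hd₂ : IsUnit (H * P₂ * Hᵀ + R).det := (Matrix.isUnit_iff_isUnit_det _).mp hS₂.isUnit
  set K₁ := P₁ * Hᵀ * (H * P₁ * Hᵀ + R)⁻¹ with hK₁
  set K₂ := P₂ * Hᵀ * (H * P₂ * Hᵀ + R)⁻¹ with hK₂
  have hS₁t : (H * P₁ * Hᵀ + R)ᵀ = H * P₁ * Hᵀ + R := by
    have := hS₁.isHermitian
    rwa [IsHermitian, conjTranspose_eq_transpose_of_trivial] at this
  have hS₂t : (H * P₂ * Hᵀ + R)ᵀ = H * P₂ * Hᵀ + R := by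
    have := hS₂.isHermitian
    rwa [IsHermitian, conjTranspose_eq_transpose_of_trivial] at this
  have hP₁t : P₁ᵀ = P₁ := by
    have := hP₁.isHermitian; rwa [IsHermitian, conjTranspose_eq_transpose_of_trivial] at this
  have hP₂t : P₂ᵀ = P₂ := by
    have := hP₂.isHermitian; rwa [IsHermitian, conjTranspose_eq_transpose_of_trivial] at this
  have k1 : K₁ * (H * P₁ * Hᵀ + R) = P₁ * Hᵀ := by
    rw [hK₁, Matrix.mul_assoc, Matrix.nonsing_inv_mul _ hd₁, Matrix.mul_one]
  have k2 : K₂ * (H * P₂ * Hᵀ + R) = P₂ * Hᵀ := by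
    rw [hK₂, Matrix.mul_assoc, Matrix.nonsing_inv_mul _ hd₂, Matrix.mul_one]
  have k1t : (H * P₁ * Hᵀ + R) * K₁ᵀ = H * P₁ := by
    rw [hK₁, Matrix.transpose_mul, Matrix.transpose_mul, Matrix.transpose_nonsing_inv, hS₁t,
      Matrix.transpose_transpose, hP₁t, ← Matrix.mul_assoc,
      Matrix.mul_nonsing_inv _ hd₁, Matrix.one_mul]
  have k2t : (H * P₂ * Hᵀ + R) * K₂ᵀ = H * P₂ := by
    rw [hK₂, Matrix.transpose_mul, Matrix.transpose_mul, Matrix.transpose_nonsing_inv, hS₂t,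
      Matrix.transpose_transpose, hP₂t, ← Matrix.mul_assoc,
      Matrix.mul_nonsing_inv _ hd₂, Matrix.one_mul]
  constructor
  · have h : (F * P₁ * Fᵀ + Q) - (F * P₂ * Fᵀ + Q) = F * (P₁ - P₂) * Fᵀ := by
      rw [Matrix.mul_sub, Matrix.sub_mul]; abel
    rw [h]
    exact psd_conj' h12 F
  · have kid := key_identity P₁ P₂ R H K₁ K₂ k1 k2 k1t k2t
    have main : (F * P₁ * Fᵀ + Q - F * P₁ * Hᵀ * (H * P₁ * Hᵀ + R)⁻¹ * H * P₁ * Fᵀ)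
        - (F * P₂ * Fᵀ + Q - F * P₂ * Hᵀ * (H * P₂ * Hᵀ + R)⁻¹ * H * P₂ * Fᵀ)
        = (F * (1 - K₁ * H)) * (P₁ - P₂) * (F * (1 - K₁ * H))ᵀ
          + (F * (K₁ - K₂)) * (H * P₂ * Hᵀ + R) * (F * (K₁ - K₂))ᵀ := by
      calc (F * P₁ * Fᵀ + Q - F * P₁ * Hᵀ * (H * P₁ * Hᵀ + R)⁻¹ * H * P₁ * Fᵀ)
            - (F * P₂ * Fᵀ + Q - F * P₂ * Hᵀ * (H * P₂ * Hᵀ + R)⁻¹ * H * P₂ * Fᵀ)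
          = F * ((P₁ - K₁ * (H * P₁)) - (P₂ - K₂ * (H * P₂))) * Fᵀ := by
            rw [hK₁, hK₂]
            simp only [Matrix.mul_sub, Matrix.sub_mul, Matrix.mul_assoc]
            abel
        _ = F * ((1 - K₁ * H) * (P₁ - P₂) * (1 - K₁ * H)ᵀ
              + (K₁ - K₂) * (H * P₂ * Hᵀ + R) * (K₁ - K₂)ᵀ) * Fᵀ := by rw [kid]
        _ = (F * (1 - K₁ * H)) * (P₁ - P₂) * (F * (1 - K₁ * H))ᵀ
              + (F * (K₁ - K₂)) * (H * P₂ * Hᵀ + R) * (F * (K₁ - K₂))ᵀ := by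
            simp only [Matrix.mul_add, Matrix.add_mul, Matrix.transpose_mul, Matrix.mul_assoc]
    rw [main]
    exact psd_add' (psd_conj' h12 _) (psd_conj' hS₂.posSemidef _)
end

section
/- Let p ∈ [0,1], let Q be an m×m real symmetric positive definite matrix, R a p×p real symmetric positive definite matrix, F an m×m real matrix and H a p×m real matrix. Define, for an m×m real symmetric positive definite P, g(P) = p · log( det(F P Fᵀ + Q − F P Hᵀ (H P Hᵀ + R)⁻¹ H P Fᵀ) / det(P) ) + (1 − p) · log( det(F P Fᵀ + Q) / det(P) ). Then g is strictly decreasing with respect to the Loewner order: if P₁ ≻ P₂ ≻ 0 then g(P₁) < g(P₂). -/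
open Matrix

set_option linter.unusedSectionVars false
set_option maxHeartbeats 1000000

section Helpers
variable {n k : Type*} [Fintype n] [DecidableEq n] [Fintype k] [DecidableEq k]



lemma det_one_add_eq_prod {K : Matrix n n ℝ} (hK : K.PosSemidef) :
    (1 + K).det = ∏ i, (1 + hK.isHermitian.eigenvalues i) := by
  set U : Matrix n n ℝ := (hK.isHermitian.eigenvectorUnitary : Matrix n n ℝ) with hUdef
  have hU : U * star U = 1 := (Matrix.mem_unitaryGroup_iff).mp (hK.isHermitian.eigenvectorUnitary).2
  have hU' : star U * U = 1 :=
    (Matrix.mem_unitaryGroup_iff').mp (hK.isHermitian.eigenvectorUnitary).2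
  have key : 1 + K = U * (1 + diagonal (RCLike.ofReal ∘ hK.isHermitian.eigenvalues)) * star U := by
    rw [Matrix.mul_add, Matrix.mul_one, Matrix.add_mul, hU]
    conv_lhs => rw [hK.isHermitian.spectral_theorem]
    rfl
  rw [key, det_mul, det_mul, mul_comm, ← mul_assoc, ← det_mul, hU', det_one, one_mul]
  have : (1 : Matrix n n ℝ) + diagonal (RCLike.ofReal ∘ hK.isHermitian.eigenvalues)
      = diagonal (fun i => 1 + hK.isHermitian.eigenvalues i) := by
    rw [← diagonal_one, diagonal_add]
    rfl
  rw [this, det_diagonal]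


lemma posDef_conj_of_isUnit {M N : Matrix n n ℝ} (hM : M.PosDef) (hN : IsUnit N.det) :
    (Nᵀ * M * N).PosDef := by
  refine PosDef.of_dotProduct_mulVec_pos ?_ (fun x hx => ?_)
  · simp only [IsHermitian, conjTranspose_mul, hM.isHermitian.eq]
    simp [Matrix.mul_assoc, hM.isHermitian.eq]
  · have hNx : N *ᵥ x ≠ 0 := fun h => hx (by
      have := congrArg (N⁻¹ *ᵥ ·) h
      simpa [mulVec_mulVec, nonsing_inv_mul _ hN] using this)
    have := hM.dotProduct_mulVec_pos hNx
    simpa [← mulVec_mulVec, dotProduct_mulVec, star_trivial, vecMul_transpose] using this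

lemma det_add_eq {A E : Matrix n n ℝ} (hA : A.PosDef) :
    ∃ K : Matrix n n ℝ, (A + E).det = A.det * (1 + K).det ∧
      ∃ N : Matrix n n ℝ, IsUnit N.det ∧ K = Nᵀ * E * N := by
  open scoped MatrixOrder in
  set B := CFC.sqrt A with hB
  have h1 : B * B = A := by
    open scoped MatrixOrder in exact CFC.sqrt_mul_sqrt_self A hA.posSemidef.nonneg
  have h2 : B.IsHermitian := by
    open scoped MatrixOrder in exact (CFC.sqrt_nonneg A).posSemidef.isHermitian
  have hBt : Bᵀ = B := by simpa using h2.eq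
  have hdet : A.det = B.det * B.det := by rw [← det_mul, h1]
  have h3 : B.det ≠ 0 := by
    intro h
    rw [h, mul_zero] at hdet
    exact absurd hdet (ne_of_gt hA.det_pos)
  have hBu : IsUnit B.det := isUnit_iff_ne_zero.mpr h3
  have hBi : B * B⁻¹ = 1 := mul_nonsing_inv _ hBu
  have hBi' : B⁻¹ * B = 1 := nonsing_inv_mul _ hBu
  refine ⟨B⁻¹ᵀ * E * B⁻¹, ?_, B⁻¹, ?_, rfl⟩
  · have key : A + E = B * (1 + B⁻¹ᵀ * E * B⁻¹) * B := by
      rw [transpose_nonsing_inv, hBt, Matrix.mul_add, Matrix.mul_one, Matrix.add_mul, h1]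
      congr 1
      symm
      calc B * (B⁻¹ * E * B⁻¹) * B = (B * B⁻¹) * E * (B⁻¹ * B) := by
            simp only [Matrix.mul_assoc]
      _ = E := by rw [hBi, hBi', Matrix.one_mul, Matrix.mul_one]
    rw [key, det_mul, det_mul, hdet]
    ring
  · rw [det_nonsing_inv]
    simpa using hBu.unit⁻¹.isUnit

lemma det_le_det_add {A E : Matrix n n ℝ} (hA : A.PosDef) (hE : E.PosSemidef) :
    A.det ≤ (A + E).det := by
  obtain ⟨K, hK, N, hN, rfl⟩ := det_add_eq hA
  have hKpsd : (Nᵀ * E * N).PosSemidef := by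
    have := hE.conjTranspose_mul_mul_same N
    rwa [conjTranspose_eq_transpose_of_trivial] at this
  have h1 : 1 ≤ (1 + Nᵀ * E * N).det := by
    rw [det_one_add_eq_prod hKpsd]
    calc (1:ℝ) = ∏ _i : n, 1 := by simp
    _ ≤ _ := Finset.prod_le_prod (by simp)
        (fun i _ => by linarith [hKpsd.eigenvalues_nonneg i])
  nlinarith [hA.det_pos]

lemma det_lt_det_add [Nonempty n] {A D : Matrix n n ℝ} (hA : A.PosDef) (hD : D.PosDef) :
    A.det < (A + D).det := by
  obtain ⟨K, hK, N, hN, rfl⟩ := det_add_eq hA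
  have hKpd : (Nᵀ * D * N).PosDef := posDef_conj_of_isUnit hD hN
  have h1 : 1 < (1 + Nᵀ * D * N).det := by
    rw [det_one_add_eq_prod hKpd.posSemidef]
    calc (1:ℝ) = ∏ _i : n, 1 := by simp
    _ < _ := Finset.prod_lt_prod_of_nonempty (by simp)
        (fun i _ => by linarith [hKpd.eigenvalues_pos i]) Finset.univ_nonempty
  nlinarith [hA.det_pos]

lemma inv_sub_inv_posDef {A B : Matrix n n ℝ} (hB : B.PosDef) (hAB : (A - B).PosDef) :
    (B⁻¹ - A⁻¹).PosDef := by
  have hApd : A.PosDef := by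
    have := hB.add hAB
    rwa [add_sub_cancel] at this
  have hAu : IsUnit A.det := isUnit_iff_ne_zero.mpr (ne_of_gt hApd.det_pos)
  have hBu : IsUnit B.det := isUnit_iff_ne_zero.mpr (ne_of_gt hB.det_pos)
  have hAi : A⁻¹ * A = 1 := nonsing_inv_mul _ hAu
  have hAi' : A * A⁻¹ = 1 := mul_nonsing_inv _ hAu
  have hBi' : B * B⁻¹ = 1 := mul_nonsing_inv _ hBu
  set D := A - B with hD
  have hAit : A⁻¹ᵀ = A⁻¹ := by
    have := hApd.inv.isHermitian.eq
    rwa [conjTranspose_eq_transpose_of_trivial] at this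
  have hDt : Dᵀ = D := by
    have := hAB.isHermitian.eq
    rwa [conjTranspose_eq_transpose_of_trivial] at this
  have key : B⁻¹ - A⁻¹ = A⁻¹ * D * A⁻¹ + A⁻¹ * D * B⁻¹ * D * A⁻¹ := by
    have e2 : A⁻¹ * D * B⁻¹ = B⁻¹ - A⁻¹ := by
      rw [hD, Matrix.mul_sub, hAi, Matrix.sub_mul, Matrix.one_mul, Matrix.mul_assoc, hBi',
        Matrix.mul_one]
    have e3 : B⁻¹ * D * A⁻¹ = B⁻¹ - A⁻¹ := by
      rw [hD, Matrix.mul_sub, nonsing_inv_mul _ hBu, Matrix.sub_mul, Matrix.one_mul,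
        Matrix.mul_assoc, hAi', Matrix.mul_one]
    rw [e2, Matrix.sub_mul, Matrix.sub_mul, e3]
    abel
  have h1 : (A⁻¹ * D * A⁻¹).PosDef := by
    have := posDef_conj_of_isUnit hAB (isUnit_iff_ne_zero.mpr (ne_of_gt hApd.inv.det_pos))
    rwa [hAit] at this
  have h2 : (A⁻¹ * D * B⁻¹ * D * A⁻¹).PosSemidef := by
    have := hB.inv.posSemidef.conjTranspose_mul_mul_same (D * A⁻¹)
    rw [conjTranspose_eq_transpose_of_trivial, transpose_mul, hAit, hDt] at this
    simpa [Matrix.mul_assoc] using this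
  rw [key]
  exact h1.add_posSemidef h2



lemma psd_tr {A : Matrix k k ℝ} (hA : A.PosSemidef) (B : Matrix k n ℝ) :
    (Bᵀ * A * B).PosSemidef := by
  have := hA.conjTranspose_mul_mul_same B
  rwa [conjTranspose_eq_transpose_of_trivial] at this

lemma psd_tr' {A : Matrix n n ℝ} (hA : A.PosSemidef) (B : Matrix k n ℝ) :
    (B * A * Bᵀ).PosSemidef := by
  have := hA.mul_mul_conjTranspose_same B
  rwa [conjTranspose_eq_transpose_of_trivial] at this

lemma riccati_inv {P : Matrix n n ℝ} {R : Matrix k k ℝ} (hP : P.PosDef) (hR : R.PosDef)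
    (H : Matrix k n ℝ) :
    P - P * Hᵀ * (H * P * Hᵀ + R)⁻¹ * H * P = (P⁻¹ + Hᵀ * R⁻¹ * H)⁻¹ := by
  set W := H * P * Hᵀ + R with hWdef
  set S := Hᵀ * R⁻¹ * H with hSdef
  have hW : W.PosDef := by
    have := hR.add_posSemidef (psd_tr' hP.posSemidef H)
    rwa [add_comm] at this
  have hPu : IsUnit P.det := isUnit_iff_ne_zero.mpr (ne_of_gt hP.det_pos)
  have hWu : IsUnit W.det := isUnit_iff_ne_zero.mpr (ne_of_gt hW.det_pos)
  have hRu : IsUnit R.det := isUnit_iff_ne_zero.mpr (ne_of_gt hR.det_pos)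
  have hRi : R⁻¹ * R = 1 := nonsing_inv_mul _ hRu
  have c1 : Hᵀ + S * P * Hᵀ = Hᵀ * R⁻¹ * W := by
    rw [hWdef, hSdef, Matrix.mul_add]
    simp [Matrix.mul_assoc, hRi, add_comm]
  have dagger : Hᵀ * (W⁻¹ * (H * P)) + S * (P * (Hᵀ * (W⁻¹ * (H * P)))) = S * P := by
    have h := congrArg (fun M => M * (W⁻¹ * (H * P))) c1
    simp only [Matrix.add_mul] at h
    simp only [Matrix.mul_assoc, Matrix.mul_nonsing_inv_cancel_left _ _ hWu] at h
    conv_rhs => rw [hSdef]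
    simp only [Matrix.mul_assoc]
    exact h
  have key : (P⁻¹ + S) * (P - P * Hᵀ * W⁻¹ * H * P) = 1 := by
    simp only [Matrix.add_mul, Matrix.mul_sub, Matrix.mul_assoc,
      Matrix.nonsing_inv_mul_cancel_left _ _ hPu, Matrix.nonsing_inv_mul _ hPu]
    have : S * (P * (Hᵀ * (W⁻¹ * (H * P)))) = S * P - Hᵀ * (W⁻¹ * (H * P)) := by
      rw [← dagger]; abel
    rw [this]
    abel
  exact (inv_eq_right_inv key).symm

lemma det_lyap {P Q : Matrix n n ℝ} (F : Matrix n n ℝ) (hP : P.PosDef) (hQ : Q.PosDef) :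
    (F * P * Fᵀ + Q).det = Q.det * ((P⁻¹ + Fᵀ * Q⁻¹ * F).det * P.det) := by
  have hQu : IsUnit Q.det := isUnit_iff_ne_zero.mpr (ne_of_gt hQ.det_pos)
  have hPu : IsUnit P.det := isUnit_iff_ne_zero.mpr (ne_of_gt hP.det_pos)
  have e1 : F * P * Fᵀ + Q = Q * (1 + Q⁻¹ * (F * P * Fᵀ)) := by
    rw [Matrix.mul_add, Matrix.mul_one, Matrix.mul_nonsing_inv_cancel_left _ _ hQu, add_comm]
  have e2 : (1 + Q⁻¹ * (F * P * Fᵀ)).det = (1 + P * (Fᵀ * Q⁻¹ * F)).det := by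
    have : Q⁻¹ * (F * P * Fᵀ) = (Q⁻¹ * F) * (P * Fᵀ) := by
      simp only [Matrix.mul_assoc]
    rw [this, det_one_add_mul_comm]
    congr 1
    simp only [Matrix.mul_assoc]
  have e3 : 1 + P * (Fᵀ * Q⁻¹ * F) = P * (P⁻¹ + Fᵀ * Q⁻¹ * F) := by
    rw [Matrix.mul_add, Matrix.mul_nonsing_inv _ hPu]
  rw [e1, det_mul, e2, e3, det_mul]
  ring


lemma det_inv_add_S {P : Matrix n n ℝ} {R : Matrix k k ℝ} (hP : P.PosDef) (hR : R.PosDef)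
    (H : Matrix k n ℝ) :
    (P⁻¹ + Hᵀ * R⁻¹ * H).det * P.det = (H * P * Hᵀ + R).det / R.det := by
  have hPu : IsUnit P.det := isUnit_iff_ne_zero.mpr (ne_of_gt hP.det_pos)
  have hRu : IsUnit R.det := isUnit_iff_ne_zero.mpr (ne_of_gt hR.det_pos)
  have e1 : P * (P⁻¹ + Hᵀ * R⁻¹ * H) = 1 + (P * Hᵀ) * (R⁻¹ * H) := by
    rw [Matrix.mul_add, Matrix.mul_nonsing_inv _ hPu]
    simp only [Matrix.mul_assoc]
  have e2 : (1 : Matrix k k ℝ) + (R⁻¹ * H) * (P * Hᵀ) = R⁻¹ * (H * P * Hᵀ + R) := by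
    rw [Matrix.mul_add, Matrix.nonsing_inv_mul _ hRu, add_comm]
    simp only [Matrix.mul_assoc]
  have := congrArg Matrix.det e1
  rw [det_mul, det_one_add_mul_comm, e2, det_mul, det_nonsing_inv, Ring.inverse_eq_inv'] at this
  have hR0 : R.det ≠ 0 := ne_of_gt hR.det_pos
  have hP0 : P.det ≠ 0 := ne_of_gt hP.det_pos
  field_simp at this ⊢
  linarith [this]

end Helpers

/-- The expected one-step log-determinant ratio of the Kalman covariance update,
`g(P) = p log(det(R₁(P))/det P) + (1 − p) log(det(L(P))/det P)`, where
`R₁(P) = F P Fᵀ + Q − F P Hᵀ (H P Hᵀ + R)⁻¹ H P Fᵀ` and `L(P) = F P Fᵀ + Q`,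
is strictly decreasing with respect to the Loewner order: `P₁ ≻ P₂ ≻ 0` implies
`g(P₁) < g(P₂)`. -/
theorem expected_logdet_ratio_strict_anti {m p : ℕ} (hm : 0 < m)
    (pr : ℝ) (hpr : pr ∈ Set.Icc (0 : ℝ) 1)
    (Q F P₁ P₂ : Matrix (Fin m) (Fin m) ℝ)
    (R : Matrix (Fin p) (Fin p) ℝ) (H : Matrix (Fin p) (Fin m) ℝ)
    (hQ : Q.PosDef) (hR : R.PosDef)
    (hP₁ : P₁.IsHermitian) (hP₂ : P₂.PosDef) (h12 : (P₁ - P₂).PosDef) :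
    pr * Real.log
        ((F * P₁ * Fᵀ + Q - F * P₁ * Hᵀ * (H * P₁ * Hᵀ + R)⁻¹ * H * P₁ * Fᵀ).det / P₁.det)
      + (1 - pr) * Real.log ((F * P₁ * Fᵀ + Q).det / P₁.det)
    < pr * Real.log
        ((F * P₂ * Fᵀ + Q - F * P₂ * Hᵀ * (H * P₂ * Hᵀ + R)⁻¹ * H * P₂ * Fᵀ).det / P₂.det)
      + (1 - pr) * Real.log ((F * P₂ * Fᵀ + Q).det / P₂.det) := by
  have hP₁pd : P₁.PosDef := by
    have := hP₂.add h12
    rwa [add_sub_cancel] at this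
  set C := Fᵀ * Q⁻¹ * F with hC
  set S := Hᵀ * R⁻¹ * H with hS
  have hCpsd : C.PosSemidef := psd_tr hQ.inv.posSemidef F
  have hSpsd : S.PosSemidef := psd_tr hR.inv.posSemidef H
  have hNE : Nonempty (Fin m) := Fin.pos_iff_nonempty.mp hm
  have hX₁ : (P₁⁻¹ + C).PosDef := hP₁pd.inv.add_posSemidef hCpsd
  have hX₂ : (P₂⁻¹ + C).PosDef := hP₂.inv.add_posSemidef hCpsd
  have hY₁ : (P₁⁻¹ + S + C).PosDef := (hP₁pd.inv.add_posSemidef hSpsd).add_posSemidef hCpsd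
  have hY₂ : (P₂⁻¹ + S + C).PosDef := (hP₂.inv.add_posSemidef hSpsd).add_posSemidef hCpsd
  have hD : (P₂⁻¹ - P₁⁻¹).PosDef := inv_sub_inv_posDef hP₂ h12
  have hW₁ : (H * P₁ * Hᵀ + R).PosDef := by
    have := hR.add_posSemidef (psd_tr' hP₁pd.posSemidef H)
    rwa [add_comm] at this
  have hW₂ : (H * P₂ * Hᵀ + R).PosDef := by
    have := hR.add_posSemidef (psd_tr' hP₂.posSemidef H)
    rwa [add_comm] at this
  have hLyap : ∀ (P : Matrix (Fin m) (Fin m) ℝ), P.PosDef →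
      (F * P * Fᵀ + Q).det / P.det = Q.det * (P⁻¹ + C).det := by
    intro P hP
    rw [det_lyap F hP hQ, mul_div_assoc, mul_div_cancel_right₀ _ (ne_of_gt hP.det_pos)]
  have hRic : ∀ (P : Matrix (Fin m) (Fin m) ℝ), P.PosDef →
      (F * P * Fᵀ + Q - F * P * Hᵀ * (H * P * Hᵀ + R)⁻¹ * H * P * Fᵀ).det / P.det
        = Q.det * R.det * (P⁻¹ + S + C).det / (H * P * Hᵀ + R).det := by
    intro P hP
    have hXS : (P⁻¹ + S).PosDef := hP.inv.add_posSemidef hSpsd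
    have hXSu : IsUnit (P⁻¹ + S).det := isUnit_iff_ne_zero.mpr (ne_of_gt hXS.det_pos)
    have hWP : (H * P * Hᵀ + R).PosDef := by
      have := hR.add_posSemidef (psd_tr' hP.posSemidef H)
      rwa [add_comm] at this
    have rearr : F * P * Fᵀ + Q - F * P * Hᵀ * (H * P * Hᵀ + R)⁻¹ * H * P * Fᵀ
        = F * (P - P * Hᵀ * (H * P * Hᵀ + R)⁻¹ * H * P) * Fᵀ + Q := by
      simp only [Matrix.mul_sub, Matrix.sub_mul, Matrix.mul_assoc]
      abel
    rw [rearr, riccati_inv hP hR H, det_lyap F hXS.inv hQ,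
      nonsing_inv_nonsing_inv _ hXSu, det_nonsing_inv, Ring.inverse_eq_inv']
    have h3 := det_inv_add_S hP hR H
    rw [eq_div_iff (ne_of_gt hR.det_pos)] at h3
    rw [← h3]
    set y := (P⁻¹ + S + C).det with hy
    set d := (P⁻¹ + S).det with hd
    have hd0 : d ≠ 0 := ne_of_gt hXS.det_pos
    have hp0 : P.det ≠ 0 := ne_of_gt hP.det_pos
    have hr0 : R.det ≠ 0 := ne_of_gt hR.det_pos
    field_simp
  have key1 : (P₁⁻¹ + C).det < (P₂⁻¹ + C).det := by
    have h := det_lt_det_add hX₁ hD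
    have e : P₁⁻¹ + C + (P₂⁻¹ - P₁⁻¹) = P₂⁻¹ + C := by abel
    rwa [e] at h
  have key2 : (P₁⁻¹ + S + C).det < (P₂⁻¹ + S + C).det := by
    have h := det_lt_det_add hY₁ hD
    have e : P₁⁻¹ + S + C + (P₂⁻¹ - P₁⁻¹) = P₂⁻¹ + S + C := by abel
    rwa [e] at h
  have key3 : (H * P₂ * Hᵀ + R).det ≤ (H * P₁ * Hᵀ + R).det := by
    have h := det_le_det_add hW₂ (psd_tr' h12.posSemidef H)
    have e : H * P₂ * Hᵀ + R + H * (P₁ - P₂) * Hᵀ = H * P₁ * Hᵀ + R := by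
      simp only [Matrix.mul_sub, Matrix.sub_mul]
      abel
    rwa [e] at h
  rw [hLyap P₁ hP₁pd, hLyap P₂ hP₂, hRic P₁ hP₁pd, hRic P₂ hP₂]
  have q0 := hQ.det_pos
  have r0 := hR.det_pos
  have hl : Real.log (Q.det * (P₁⁻¹ + C).det) < Real.log (Q.det * (P₂⁻¹ + C).det) :=
    Real.log_lt_log (mul_pos q0 hX₁.det_pos) (by nlinarith [hX₁.det_pos])
  have hr1pos : 0 < Q.det * R.det * (P₁⁻¹ + S + C).det / (H * P₁ * Hᵀ + R).det :=
    div_pos (mul_pos (mul_pos q0 r0) hY₁.det_pos) hW₁.det_pos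
  have hrlt : Q.det * R.det * (P₁⁻¹ + S + C).det / (H * P₁ * Hᵀ + R).det
      < Q.det * R.det * (P₂⁻¹ + S + C).det / (H * P₂ * Hᵀ + R).det := by
    rw [div_lt_div_iff₀ hW₁.det_pos hW₂.det_pos]
    have h1 : 0 < Q.det * R.det := mul_pos q0 r0
    have a1 : Q.det * R.det * (P₁⁻¹ + S + C).det < Q.det * R.det * (P₂⁻¹ + S + C).det :=
      mul_lt_mul_of_pos_left key2 h1
    have step1 := mul_lt_mul_of_pos_right a1 hW₂.det_pos
    have step2 := mul_le_mul_of_nonneg_left key3 (mul_pos h1 hY₂.det_pos).le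
    linarith
  have hrlog := Real.log_lt_log hr1pos hrlt
  rcases lt_or_eq_of_le hpr.1 with h0 | h0
  · have t1 := mul_lt_mul_of_pos_left hrlog h0
    have t2 := mul_le_mul_of_nonneg_left hl.le (by linarith [hpr.2] : (0:ℝ) ≤ 1 - pr)
    linarith
  · rw [← h0]
    simpa using hl
end

section
/- In the setting of the value iteration below, for every k ≥ 0 the iterate V_k is monotone with respect to the Loewner order in each component separately: V_k(P, P̄) is decreasing in P_a, decreasing in P̄_l for every l ≠ a, increasing in P_l for every l ≠ a, and increasing in P̄_a. -/
open Matrix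

/-- Riccati/Lyapunov covariance update for one target: with a received measurement
(`b = true`) this is the Riccati update, otherwise the Lyapunov (predictor) update. -/
noncomputable def kalmanUpdate {m p : ℕ}
    (F Q : Matrix (Fin m) (Fin m) ℝ) (H : Matrix (Fin p) (Fin m) ℝ)
    (R : Matrix (Fin p) (Fin p) ℝ) (P : Matrix (Fin m) (Fin m) ℝ) (b : Bool) :
    Matrix (Fin m) (Fin m) ℝ :=
  F * P * Fᵀ + Q - if b then F * P * Hᵀ * (H * P * Hᵀ + R)⁻¹ * H * P * Fᵀ else 0

/-- Lyapunov (measurement-free predictor) covariance update. -/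
noncomputable def lyapUpdate {m : ℕ}
    (F Q P : Matrix (Fin m) (Fin m) ℝ) : Matrix (Fin m) (Fin m) ℝ :=
  F * P * Fᵀ + Q

/-- Probability weight of a detection pattern `b : Fin L → Bool`. -/
noncomputable def detWeight {L : ℕ} (pd : Fin L → ℝ) (b : Fin L → Bool) : ℝ :=
  ∏ l, if b l then pd l else 1 - pd l

/-- Stopping cost `C̄(P, P̄)` (mutual-information based stochastic observability cost). -/
noncomputable def stopCost {L m : ℕ} (a : Fin L) (α β : Fin L → ℝ)
    (P Pbar : Fin L → Matrix (Fin m) (Fin m) ℝ) : ℝ :=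
  - α a * Real.log (Pbar a).det + β a * Real.log (P a).det
    + ∑ l ∈ Finset.univ.erase a,
        (α l * Real.log (Pbar l).det - β l * Real.log (P l).det)

/-- The one-step continuation cost
`C(P, P̄) = c − C̄(P, P̄) + Σ_b q(b) C̄(T(P, P̄, b))`. -/
noncomputable def contCost {L m p : ℕ} (a : Fin L) (α β : Fin L → ℝ) (c : ℝ)
    (F Q : Fin L → Matrix (Fin m) (Fin m) ℝ)
    (H : Fin L → Matrix (Fin p) (Fin m) ℝ)
    (R : Fin L → Matrix (Fin p) (Fin p) ℝ) (pd : Fin L → ℝ)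
    (P Pbar : Fin L → Matrix (Fin m) (Fin m) ℝ) : ℝ :=
  c - stopCost a α β P Pbar
    + ∑ b : Fin L → Bool,
        detWeight pd b *
          stopCost a α β
            (fun l => kalmanUpdate (F l) (Q l) (H l) (R l) (P l) (b l))
            (fun l => lyapUpdate (F l) (Q l) (Pbar l))

/-- The value iteration: `V_0 = −C̄` and
`V_{k+1}(P, P̄) = min{0, C(P, P̄) + Σ_b q(b) V_k(T(P, P̄, b))}`. -/
noncomputable def valIter {L m p : ℕ} (a : Fin L) (α β : Fin L → ℝ) (c : ℝ)
    (F Q : Fin L → Matrix (Fin m) (Fin m) ℝ)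
    (H : Fin L → Matrix (Fin p) (Fin m) ℝ)
    (R : Fin L → Matrix (Fin p) (Fin p) ℝ) (pd : Fin L → ℝ) :
    ℕ → (Fin L → Matrix (Fin m) (Fin m) ℝ) → (Fin L → Matrix (Fin m) (Fin m) ℝ) → ℝ
  | 0, P, Pbar => - stopCost a α β P Pbar
  | k + 1, P, Pbar =>
      min 0
        (contCost a α β c F Q H R pd P Pbar
          + ∑ b : Fin L → Bool,
              detWeight pd b *
                valIter a α β c F Q H R pd k
                  (fun l => kalmanUpdate (F l) (Q l) (H l) (R l) (P l) (b l))
                  (fun l => lyapUpdate (F l) (Q l) (Pbar l)))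


namespace Matrix.PosSemidef
open scoped MatrixOrder

noncomputable def sqrt {n : Type*} [Fintype n] [DecidableEq n] {A : Matrix n n ℝ}
    (_hA : A.PosSemidef) : Matrix n n ℝ := CFC.sqrt A

lemma posSemidef_sqrt {n : Type*} [Fintype n] [DecidableEq n] {A : Matrix n n ℝ}
    (hA : A.PosSemidef) : hA.sqrt.PosSemidef :=
  Matrix.nonneg_iff_posSemidef.mp (CFC.sqrt_nonneg A)

lemma sqrt_mul_self {n : Type*} [Fintype n] [DecidableEq n] {A : Matrix n n ℝ}
    (hA : A.PosSemidef) : hA.sqrt * hA.sqrt = A :=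
  CFC.sqrt_mul_sqrt_self A (Matrix.nonneg_iff_posSemidef.mpr hA)

end Matrix.PosSemidef

namespace ValIterAux
open Matrix
set_option linter.unusedSectionVars false

section MatrixCore
variable {n n' : Type*} [Fintype n] [DecidableEq n] [Fintype n'] [DecidableEq n']

lemma rct (A : Matrix n n' ℝ) : Aᴴ = Aᵀ := conjTranspose_eq_transpose_of_trivial A

lemma psd_conj {A : Matrix n n ℝ} (hA : A.PosSemidef) (M : Matrix n' n ℝ) :
    (M * A * Mᵀ).PosSemidef := by
  rw [← rct]; exact hA.mul_mul_conjTranspose_same M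

lemma sqrt_transpose {D : Matrix n n ℝ} (hD : D.PosSemidef) : hD.sqrtᵀ = hD.sqrt := by
  rw [← rct]; exact hD.posSemidef_sqrt.isHermitian

lemma pd_conj_add {A : Matrix n n ℝ} {Q : Matrix n' n' ℝ} (hA : A.PosSemidef) (hQ : Q.PosDef)
    (M : Matrix n' n ℝ) : (M * A * Mᵀ + Q).PosDef :=
  Matrix.PosDef.posSemidef_add (psd_conj hA M) hQ

lemma det_inv_pd {A : Matrix n n ℝ} (hA : A.PosDef) : A⁻¹.det = A.det⁻¹ := by
  rw [Matrix.det_nonsing_inv, Ring.inverse_eq_inv']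

lemma one_add_psd_pd {S : Matrix n n ℝ} (hS : S.PosSemidef) : (1 + S).PosDef :=
  Matrix.PosDef.add_posSemidef Matrix.PosDef.one hS

lemma one_le_det_one_add {S : Matrix n n ℝ} (hS : S.PosSemidef) : 1 ≤ (1 + S).det := by
  have h1 : (1 + S) = (hS.1.eigenvectorUnitary : Matrix n n ℝ) *
      (1 + diagonal (RCLike.ofReal ∘ hS.1.eigenvalues)) *
      (star (hS.1.eigenvectorUnitary : Matrix n n ℝ)) := by
    rw [Matrix.mul_add, Matrix.add_mul, Matrix.mul_one,
      (Matrix.mem_unitaryGroup_iff).mp hS.1.eigenvectorUnitary.2]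
    exact congrArg (1 + ·) hS.1.spectral_theorem
  rw [h1, det_mul, det_mul, mul_comm, ← mul_assoc, ← det_mul,
    (Matrix.mem_unitaryGroup_iff').mp hS.1.eigenvectorUnitary.2, det_one, one_mul]
  have h2 : (1 : Matrix n n ℝ) + diagonal (RCLike.ofReal ∘ hS.1.eigenvalues)
      = diagonal (fun i => 1 + hS.1.eigenvalues i) := by
    rw [← diagonal_one, diagonal_add]; rfl
  rw [h2, det_diagonal]
  calc (1:ℝ) = ∏ _i : n, 1 := by simp
  _ ≤ _ := Finset.prod_le_prod (by simp) (fun i _ => by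
      have := hS.eigenvalues_nonneg i; linarith)

lemma det_add_conj {M : Matrix n n ℝ} (hM : M.PosDef) {D : Matrix n' n' ℝ}
    (hD : D.PosSemidef) (F : Matrix n n' ℝ) :
    (M + F * D * Fᵀ).det = M.det * (1 + hD.sqrt * Fᵀ * M⁻¹ * F * hD.sqrt).det := by
  have hMu : IsUnit M.det := hM.det_pos.ne'.isUnit
  have h1 : M + F * D * Fᵀ = M * (1 + M⁻¹ * (F * D * Fᵀ)) := by
    rw [Matrix.mul_add, Matrix.mul_one, Matrix.mul_nonsing_inv_cancel_left _ _ hMu]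
  rw [h1, det_mul]
  congr 1
  have h2 : M⁻¹ * (F * D * Fᵀ) = (M⁻¹ * F * hD.sqrt) * (hD.sqrt * Fᵀ) := by
    conv_lhs => rw [← hD.sqrt_mul_self]
    simp only [Matrix.mul_assoc]
  rw [h2, det_one_add_mul_comm]
  congr 1
  simp [Matrix.mul_assoc]

lemma inv_conj_le {P M F : Matrix n n ℝ} (hP : P.PosDef) (hM : M.PosDef)
    (h : (M - F * P * Fᵀ).PosSemidef) : (P⁻¹ - Fᵀ * M⁻¹ * F).PosSemidef := by
  haveI : Invertible P⁻¹ := hP.inv.isUnit.invertible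
  haveI : Invertible M := hM.isUnit.invertible
  have hB : (Fᵀ)ᴴ = F := by rw [rct, transpose_transpose]
  have h11 := Matrix.PosDef.fromBlocks₁₁ (Fᵀ) M hP.inv
  have h22 := Matrix.PosDef.fromBlocks₂₂ (P⁻¹) (Fᵀ) hM
  rw [hB] at h11 h22
  rw [Matrix.nonsing_inv_nonsing_inv _ hP.det_pos.ne'.isUnit] at h11
  exact h22.mp (h11.mpr h)

lemma inv_antitone {A B : Matrix n n ℝ} (hA : A.PosDef) (hB : B.PosDef)
    (h : (B - A).PosSemidef) : (A⁻¹ - B⁻¹).PosSemidef := by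
  have := inv_conj_le (F := 1) hA hB (by simpa using h)
  simpa using this

lemma det_mono {A D : Matrix n n ℝ} (hA : A.PosDef) (hD : D.PosSemidef) :
    A.det ≤ (A + D).det := by
  have h := det_add_conj hA hD 1
  simp only [Matrix.one_mul, Matrix.mul_one, transpose_one] at h
  rw [h]
  have hpsd : (hD.sqrt * A⁻¹ * hD.sqrt).PosSemidef := by
    have := psd_conj hA.inv.posSemidef hD.sqrt
    rwa [sqrt_transpose] at this
  exact le_mul_of_one_le_right hA.det_pos.le (one_le_det_one_add hpsd)

lemma det_mono' {A B : Matrix n n ℝ} (hA : A.PosDef) (h : (B - A).PosSemidef) :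
    A.det ≤ B.det := by
  have := det_mono hA h; rwa [add_sub_cancel] at this

lemma logdet_mono {A B : Matrix n n ℝ} (hA : A.PosDef) (h : (B - A).PosSemidef) :
    Real.log A.det ≤ Real.log B.det :=
  Real.log_le_log hA.det_pos (det_mono' hA h)

lemma pd_of_le {A B : Matrix n n ℝ} (hA : A.PosDef) (h : (B - A).PosSemidef) : B.PosDef := by
  have : B = A + (B - A) := by abel
  rw [this]; exact hA.add_posSemidef h

lemma logdet_conj_diff {A B Q : Matrix n n ℝ} (F : Matrix n n ℝ) (hA : A.PosDef)
    (hQ : Q.PosDef) (h : (B - A).PosSemidef) :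
    Real.log (F * B * Fᵀ + Q).det - Real.log (F * A * Fᵀ + Q).det
      ≤ Real.log B.det - Real.log A.det := by
  set M := F * A * Fᵀ + Q with hMdef
  have hM : M.PosDef := pd_conj_add hA.posSemidef hQ F
  have e1 : F * B * Fᵀ + Q = M + F * (B - A) * Fᵀ := by
    rw [hMdef]; simp [Matrix.mul_sub, Matrix.sub_mul]; abel
  have d1 := det_add_conj hM h F
  have d2 := det_add_conj hA h 1
  simp only [Matrix.one_mul, Matrix.mul_one, transpose_one] at d2
  set d := h.sqrt with hd
  have hX : (d * Fᵀ * M⁻¹ * F * d).PosSemidef := by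
    have h0 : (Fᵀ * M⁻¹ * F).PosSemidef := by
      have := psd_conj hM.inv.posSemidef Fᵀ
      rwa [transpose_transpose] at this
    have := psd_conj h0 d
    rwa [sqrt_transpose, show d * (Fᵀ * M⁻¹ * F) * d = d * Fᵀ * M⁻¹ * F * d by
      simp [Matrix.mul_assoc]] at this
  have hY : (d * A⁻¹ * d).PosSemidef := by
    have := psd_conj hA.inv.posSemidef d
    rwa [sqrt_transpose] at this
  have hXY : ((1 + d * A⁻¹ * d) - (1 + d * Fᵀ * M⁻¹ * F * d)).PosSemidef := by
    have h0 : (A⁻¹ - Fᵀ * M⁻¹ * F).PosSemidef := by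
      refine inv_conj_le hA hM ?_
      rw [hMdef]; simpa using hQ.posSemidef
    have := psd_conj h0 d
    rw [sqrt_transpose] at this
    have e3 : (1 + d * A⁻¹ * d) - (1 + d * Fᵀ * M⁻¹ * F * d)
        = d * (A⁻¹ - Fᵀ * M⁻¹ * F) * d := by
      simp only [Matrix.mul_sub, Matrix.sub_mul, Matrix.mul_assoc]
      abel
    rwa [e3]
  have hdetle : (1 + d * Fᵀ * M⁻¹ * F * d).det ≤ (1 + d * A⁻¹ * d).det :=
    det_mono' (one_add_psd_pd hX) hXY
  have l1 : Real.log (F * B * Fᵀ + Q).det = Real.log M.det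
      + Real.log (1 + d * Fᵀ * M⁻¹ * F * d).det := by
    rw [e1, d1, Real.log_mul hM.det_pos.ne' (one_add_psd_pd hX).det_pos.ne']
  have l2 : Real.log B.det = Real.log A.det + Real.log (1 + d * A⁻¹ * d).det := by
    have eB : B.det = (A + (B - A)).det := by rw [add_sub_cancel]
    rw [eB, d2, Real.log_mul hA.det_pos.ne' (one_add_psd_pd hY).det_pos.ne']
  have l3 : Real.log (1 + d * Fᵀ * M⁻¹ * F * d).det ≤ Real.log (1 + d * A⁻¹ * d).det :=
    Real.log_le_log (one_add_psd_pd hX).det_pos hdetle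
  rw [l1, l2]
  linarith

section midS
variable {P K : Matrix n n ℝ}

lemma pinvK_pd (hP : P.PosDef) (hK : K.PosSemidef) : (P⁻¹ + K).PosDef :=
  hP.inv.add_posSemidef hK

lemma midS_pd (hP : P.PosDef) (hK : K.PosSemidef) : ((P⁻¹ + K)⁻¹).PosDef :=
  (pinvK_pd hP hK).inv

lemma midS_mono {P₁ P₂ : Matrix n n ℝ} (h1 : P₁.PosDef) (h2 : P₂.PosDef)
    (hK : K.PosSemidef) (h : (P₂ - P₁).PosSemidef) :
    ((P₂⁻¹ + K)⁻¹ - (P₁⁻¹ + K)⁻¹).PosSemidef := by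
  have ha := inv_antitone h1 h2 h
  have hd : ((P₁⁻¹ + K) - (P₂⁻¹ + K)).PosSemidef := by
    rwa [show (P₁⁻¹ + K) - (P₂⁻¹ + K) = P₁⁻¹ - P₂⁻¹ by abel]
  exact inv_antitone (pinvK_pd h2 hK) (pinvK_pd h1 hK) hd

lemma logdet_midS (hP : P.PosDef) (hK : K.PosSemidef) :
    Real.log ((P⁻¹ + K)⁻¹).det
      = Real.log P.det - Real.log (1 + hK.sqrt * P * hK.sqrt).det := by
  set k := hK.sqrt with hk
  have hPu : IsUnit P.det := hP.det_pos.ne'.isUnit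
  have e1 : P⁻¹ + K = P⁻¹ * (1 + P * K) := by
    rw [Matrix.mul_add, Matrix.mul_one, Matrix.nonsing_inv_mul_cancel_left _ _ hPu]
  have hkk : (k * P * k).PosSemidef := by
    have := psd_conj hP.posSemidef k
    rwa [sqrt_transpose] at this
  have e2 : (1 + P * K).det = (1 + k * P * k).det := by
    have e3 : P * K = (P * k) * k := by
      conv_lhs => rw [← hK.sqrt_mul_self]
      simp only [Matrix.mul_assoc, hk]
    rw [e3, det_one_add_mul_comm, ← Matrix.mul_assoc]
  have hdet1 : (0:ℝ) < (1 + k * P * k).det := (one_add_psd_pd hkk).det_pos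
  rw [det_inv_pd (pinvK_pd hP hK), e1, det_mul, det_inv_pd hP, e2,
    mul_inv, inv_inv, Real.log_mul hP.det_pos.ne' (by positivity), Real.log_inv]
  ring

lemma logdet_midS_diff {P₁ P₂ : Matrix n n ℝ} (h1 : P₁.PosDef) (h2 : P₂.PosDef)
    (hK : K.PosSemidef) (h : (P₂ - P₁).PosSemidef) :
    Real.log ((P₂⁻¹ + K)⁻¹).det - Real.log ((P₁⁻¹ + K)⁻¹).det
      ≤ Real.log P₂.det - Real.log P₁.det := by
  rw [logdet_midS h1 hK, logdet_midS h2 hK]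
  have hkk1 : (hK.sqrt * P₁ * hK.sqrt).PosSemidef := by
    have := psd_conj h1.posSemidef hK.sqrt
    rwa [sqrt_transpose] at this
  have hdiff : ((1 + hK.sqrt * P₂ * hK.sqrt) - (1 + hK.sqrt * P₁ * hK.sqrt)).PosSemidef := by
    have := psd_conj h hK.sqrt
    rw [sqrt_transpose] at this
    have e : (1 + hK.sqrt * P₂ * hK.sqrt) - (1 + hK.sqrt * P₁ * hK.sqrt)
        = hK.sqrt * (P₂ - P₁) * hK.sqrt := by
      simp only [Matrix.mul_sub, Matrix.sub_mul]
      abel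
    rwa [e]
  have := logdet_mono (one_add_psd_pd hkk1) hdiff
  linarith

end midS
end MatrixCore

section Kalman
variable {m p : ℕ} {F Q : Matrix (Fin m) (Fin m) ℝ} {H : Matrix (Fin p) (Fin m) ℝ}
  {R : Matrix (Fin p) (Fin p) ℝ}

/-- abbreviation for the information-form mid matrix -/
noncomputable def sKal (H : Matrix (Fin p) (Fin m) ℝ) (R : Matrix (Fin p) (Fin p) ℝ)
    (P : Matrix (Fin m) (Fin m) ℝ) (b : Bool) : Matrix (Fin m) (Fin m) ℝ :=
  if b then (P⁻¹ + Hᵀ * R⁻¹ * H)⁻¹ else P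

lemma K_psd (hR : R.PosDef) : (Hᵀ * R⁻¹ * H).PosSemidef := by
  have := psd_conj hR.inv.posSemidef Hᵀ
  rwa [transpose_transpose] at this

lemma sKal_pd {P : Matrix (Fin m) (Fin m) ℝ} (hP : P.PosDef) (hR : R.PosDef) (b : Bool) :
    (sKal H R P b).PosDef := by
  cases b <;> simp only [sKal, if_true, if_false, Bool.false_eq_true, ite_false, ite_true]
  · exact hP
  · exact midS_pd hP (K_psd hR)

lemma sKal_mono {P₁ P₂ : Matrix (Fin m) (Fin m) ℝ} (h1 : P₁.PosDef) (h2 : P₂.PosDef)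
    (hR : R.PosDef) (h : (P₂ - P₁).PosSemidef) (b : Bool) :
    (sKal H R P₂ b - sKal H R P₁ b).PosSemidef := by
  cases b <;> simp only [sKal, Bool.false_eq_true, ite_false, ite_true]
  · exact h
  · exact midS_mono h1 h2 (K_psd hR) h

lemma sKal_logdet_diff {P₁ P₂ : Matrix (Fin m) (Fin m) ℝ} (h1 : P₁.PosDef) (h2 : P₂.PosDef)
    (hR : R.PosDef) (h : (P₂ - P₁).PosSemidef) (b : Bool) :
    Real.log (sKal H R P₂ b).det - Real.log (sKal H R P₁ b).det
      ≤ Real.log P₂.det - Real.log P₁.det := by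
  cases b <;> simp only [sKal, Bool.false_eq_true, ite_false, ite_true]
  · exact le_refl _
  · exact logdet_midS_diff h1 h2 (K_psd hR) h

lemma kalman_eq {P : Matrix (Fin m) (Fin m) ℝ} (hP : P.PosDef) (hR : R.PosDef) (b : Bool) :
    kalmanUpdate F Q H R P b = F * sKal H R P b * Fᵀ + Q := by
  cases b
  · simp [kalmanUpdate, sKal]
  · simp only [kalmanUpdate, sKal, ite_true]
    have hPu : IsUnit P.det := hP.det_pos.ne'.isUnit
    have hRu : IsUnit R.det := hR.det_pos.ne'.isUnit
    have hS : (R + H * P * Hᵀ).PosDef :=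
      Matrix.PosDef.add_posSemidef hR (psd_conj hP.posSemidef H)
    have hw := Matrix.add_mul_mul_inv_eq_sub P⁻¹ Hᵀ R⁻¹ H hP.inv.isUnit hR.inv.isUnit
      (by rw [Matrix.nonsing_inv_nonsing_inv _ hRu, Matrix.nonsing_inv_nonsing_inv _ hPu]
          exact hS.isUnit)
    rw [Matrix.nonsing_inv_nonsing_inv _ hPu, Matrix.nonsing_inv_nonsing_inv _ hRu] at hw
    rw [hw, add_comm R (H * P * Hᵀ)]
    simp only [Matrix.mul_sub, Matrix.sub_mul, Matrix.mul_assoc]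
    abel

lemma kalman_pd {P : Matrix (Fin m) (Fin m) ℝ} (hP : P.PosDef) (hQ : Q.PosDef)
    (hR : R.PosDef) (b : Bool) : (kalmanUpdate F Q H R P b).PosDef := by
  rw [kalman_eq hP hR]
  exact pd_conj_add (sKal_pd hP hR b).posSemidef hQ F

lemma kalman_mono {P₁ P₂ : Matrix (Fin m) (Fin m) ℝ} (h1 : P₁.PosDef) (h2 : P₂.PosDef)
    (hR : R.PosDef) (h : (P₂ - P₁).PosSemidef) (b : Bool) :
    (kalmanUpdate F Q H R P₂ b - kalmanUpdate F Q H R P₁ b).PosSemidef := by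
  rw [kalman_eq h1 hR, kalman_eq h2 hR]
  have := psd_conj (sKal_mono (H := H) h1 h2 hR h b) F
  have e : F * sKal H R P₂ b * Fᵀ + Q - (F * sKal H R P₁ b * Fᵀ + Q)
      = F * (sKal H R P₂ b - sKal H R P₁ b) * Fᵀ := by
    simp only [Matrix.mul_sub, Matrix.sub_mul]
    abel
  rwa [e]

lemma kalman_logdet_diff {P₁ P₂ : Matrix (Fin m) (Fin m) ℝ} (h1 : P₁.PosDef)
    (h2 : P₂.PosDef) (hQ : Q.PosDef) (hR : R.PosDef) (h : (P₂ - P₁).PosSemidef) (b : Bool) :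
    Real.log (kalmanUpdate F Q H R P₂ b).det - Real.log P₂.det
      ≤ Real.log (kalmanUpdate F Q H R P₁ b).det - Real.log P₁.det := by
  rw [kalman_eq h1 hR, kalman_eq h2 hR]
  have hc := logdet_conj_diff F (sKal_pd h1 hR b) hQ (sKal_mono (H := H) h1 h2 hR h b)
  have hs := sKal_logdet_diff (H := H) h1 h2 hR h b
  linarith

lemma lyap_eq_kalman (P : Matrix (Fin m) (Fin m) ℝ) :
    lyapUpdate F Q P = kalmanUpdate F Q H R P false := by
  simp [kalmanUpdate, lyapUpdate]

end Kalman
end ValIterAux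


namespace ValIterAux
open Matrix
set_option linter.unusedSectionVars false

section VI
variable {L m p : ℕ} {a : Fin L} {α β : Fin L → ℝ}

lemma detWeight_nonneg {pd : Fin L → ℝ} (hpd : ∀ l, pd l ∈ Set.Icc (0:ℝ) 1)
    (b : Fin L → Bool) : 0 ≤ detWeight pd b :=
  Finset.prod_nonneg fun l _ => by
    rcases hpd l with ⟨h0, h1⟩
    cases hb : b l <;> simp [hb] <;> linarith

lemma sum_detWeight {pd : Fin L → ℝ} : ∑ b : Fin L → Bool, detWeight pd b = 1 := by
  unfold detWeight
  rw [← Fintype.prod_sum (fun l (x : Bool) => if x then pd l else 1 - pd l)]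
  simp

lemma stopCost_sub (P Pbar Pn Pbarn : Fin L → Matrix (Fin m) (Fin m) ℝ) :
    stopCost a α β Pn Pbarn - stopCost a α β P Pbar
      = -(α a) * (Real.log (Pbarn a).det - Real.log (Pbar a).det)
        + β a * (Real.log (Pn a).det - Real.log (P a).det)
        + ∑ l ∈ Finset.univ.erase a,
            (α l * (Real.log (Pbarn l).det - Real.log (Pbar l).det)
              - β l * (Real.log (Pn l).det - Real.log (P l).det)) := by
  unfold stopCost
  have e : ∑ l ∈ Finset.univ.erase a,
        (α l * (Real.log (Pbarn l).det - Real.log (Pbar l).det)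
          - β l * (Real.log (Pn l).det - Real.log (P l).det))
      = (∑ l ∈ Finset.univ.erase a,
          (α l * Real.log (Pbarn l).det - β l * Real.log (Pn l).det))
        - (∑ l ∈ Finset.univ.erase a,
          (α l * Real.log (Pbar l).det - β l * Real.log (P l).det)) := by
    rw [← Finset.sum_sub_distrib]
    exact Finset.sum_congr rfl fun l _ => by ring
  rw [e]; ring

section Master
variable {c : ℝ} {F Q : Fin L → Matrix (Fin m) (Fin m) ℝ}
  {H : Fin L → Matrix (Fin p) (Fin m) ℝ} {R : Fin L → Matrix (Fin p) (Fin p) ℝ}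
  {pd : Fin L → ℝ}
variable (hα : ∀ l, 0 ≤ α l) (hβ : ∀ l, 0 ≤ β l)
  (hQ : ∀ l, (Q l).PosDef) (hR : ∀ l, (R l).PosDef)
  (hpd : ∀ l, pd l ∈ Set.Icc (0 : ℝ) 1)

include hα hβ in
lemma stopCost_mono
    {P P' Pbar Pbar' : Fin L → Matrix (Fin m) (Fin m) ℝ}
    (hP : ∀ l, (P l).PosDef) (hP' : ∀ l, (P' l).PosDef)
    (hPbar : ∀ l, (Pbar l).PosDef) (hPbar' : ∀ l, (Pbar' l).PosDef)
    (h1 : (P' a - P a).PosSemidef)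
    (h2 : ∀ l, l ≠ a → (Pbar' l - Pbar l).PosSemidef)
    (h3 : ∀ l, l ≠ a → (P l - P' l).PosSemidef)
    (h4 : (Pbar a - Pbar' a).PosSemidef) :
    stopCost a α β P Pbar ≤ stopCost a α β P' Pbar' := by
  unfold stopCost
  have t1 : -(α a) * Real.log (Pbar a).det ≤ -(α a) * Real.log (Pbar' a).det := by
    have h := mul_le_mul_of_nonneg_left (logdet_mono (hPbar' a) h4) (hα a)
    linarith
  have t2 : β a * Real.log (P a).det ≤ β a * Real.log (P' a).det :=
    mul_le_mul_of_nonneg_left (logdet_mono (hP a) h1) (hβ a)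
  have t3 : ∑ l ∈ Finset.univ.erase a,
        (α l * Real.log (Pbar l).det - β l * Real.log (P l).det)
      ≤ ∑ l ∈ Finset.univ.erase a,
        (α l * Real.log (Pbar' l).det - β l * Real.log (P' l).det) := by
    refine Finset.sum_le_sum fun l hl => ?_
    have hne : l ≠ a := (Finset.mem_erase.1 hl).1
    have u1 : α l * Real.log (Pbar l).det ≤ α l * Real.log (Pbar' l).det :=
      mul_le_mul_of_nonneg_left (logdet_mono (hPbar l) (h2 l hne)) (hα l)
    have u2 : β l * Real.log (P' l).det ≤ β l * Real.log (P l).det :=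
      mul_le_mul_of_nonneg_left (logdet_mono (hP' l) (h3 l hne)) (hβ l)
    linarith
  linarith

include hα hβ hQ hR in
lemma stopCost_diff
    {P P' Pbar Pbar' : Fin L → Matrix (Fin m) (Fin m) ℝ}
    (hP : ∀ l, (P l).PosDef) (hP' : ∀ l, (P' l).PosDef)
    (hPbar : ∀ l, (Pbar l).PosDef) (hPbar' : ∀ l, (Pbar' l).PosDef)
    (h1 : (P' a - P a).PosSemidef)
    (h2 : ∀ l, l ≠ a → (Pbar' l - Pbar l).PosSemidef)
    (h3 : ∀ l, l ≠ a → (P l - P' l).PosSemidef)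
    (h4 : (Pbar a - Pbar' a).PosSemidef)
    (b : Fin L → Bool) :
    stopCost a α β
        (fun l => kalmanUpdate (F l) (Q l) (H l) (R l) (P' l) (b l))
        (fun l => lyapUpdate (F l) (Q l) (Pbar' l))
      - stopCost a α β P' Pbar'
      ≤ stopCost a α β
          (fun l => kalmanUpdate (F l) (Q l) (H l) (R l) (P l) (b l))
          (fun l => lyapUpdate (F l) (Q l) (Pbar l))
        - stopCost a α β P Pbar := by
  rw [stopCost_sub, stopCost_sub]
  have t1 : -(α a) * (Real.log (lyapUpdate (F a) (Q a) (Pbar' a)).det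
        - Real.log (Pbar' a).det)
      ≤ -(α a) * (Real.log (lyapUpdate (F a) (Q a) (Pbar a)).det
        - Real.log (Pbar a).det) := by
    rw [lyap_eq_kalman (H := H a) (R := R a), lyap_eq_kalman (H := H a) (R := R a)]
    have h := mul_le_mul_of_nonneg_left
      (kalman_logdet_diff (F := F a) (H := H a) (hPbar' a) (hPbar a) (hQ a) (hR a) h4 false)
      (hα a)
    linarith
  have t2 : β a * (Real.log (kalmanUpdate (F a) (Q a) (H a) (R a) (P' a) (b a)).det
        - Real.log (P' a).det)
      ≤ β a * (Real.log (kalmanUpdate (F a) (Q a) (H a) (R a) (P a) (b a)).det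
        - Real.log (P a).det) :=
    mul_le_mul_of_nonneg_left
      (kalman_logdet_diff (hP a) (hP' a) (hQ a) (hR a) h1 (b a)) (hβ a)
  have t3 : ∑ l ∈ Finset.univ.erase a,
        (α l * (Real.log (lyapUpdate (F l) (Q l) (Pbar' l)).det - Real.log (Pbar' l).det)
          - β l * (Real.log (kalmanUpdate (F l) (Q l) (H l) (R l) (P' l) (b l)).det
              - Real.log (P' l).det))
      ≤ ∑ l ∈ Finset.univ.erase a,
        (α l * (Real.log (lyapUpdate (F l) (Q l) (Pbar l)).det - Real.log (Pbar l).det)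
          - β l * (Real.log (kalmanUpdate (F l) (Q l) (H l) (R l) (P l) (b l)).det
              - Real.log (P l).det)) := by
    refine Finset.sum_le_sum fun l hl => ?_
    have hne : l ≠ a := (Finset.mem_erase.1 hl).1
    have u1 : α l * (Real.log (lyapUpdate (F l) (Q l) (Pbar' l)).det
          - Real.log (Pbar' l).det)
        ≤ α l * (Real.log (lyapUpdate (F l) (Q l) (Pbar l)).det
          - Real.log (Pbar l).det) := by
      rw [lyap_eq_kalman (H := H l) (R := R l), lyap_eq_kalman (H := H l) (R := R l)]
      exact mul_le_mul_of_nonneg_left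
        (kalman_logdet_diff (hPbar l) (hPbar' l) (hQ l) (hR l) (h2 l hne) false) (hα l)
    have u2 : β l * (Real.log (kalmanUpdate (F l) (Q l) (H l) (R l) (P l) (b l)).det
          - Real.log (P l).det)
        ≤ β l * (Real.log (kalmanUpdate (F l) (Q l) (H l) (R l) (P' l) (b l)).det
          - Real.log (P' l).det) :=
      mul_le_mul_of_nonneg_left
        (kalman_logdet_diff (hP' l) (hP l) (hQ l) (hR l) (h3 l hne) (b l)) (hβ l)
    linarith
  linarith

lemma sum_weight_shift (Z : (Fin L → Bool) → ℝ) (y : ℝ) :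
    -y + ∑ b : Fin L → Bool, detWeight pd b * Z b
      = ∑ b : Fin L → Bool, detWeight pd b * (Z b - y) := by
  have e : ∑ b : Fin L → Bool, detWeight pd b * (Z b - y)
      = (∑ b : Fin L → Bool, detWeight pd b * Z b)
        - (∑ b : Fin L → Bool, detWeight pd b) * y := by
    rw [Finset.sum_mul, ← Finset.sum_sub_distrib]
    exact Finset.sum_congr rfl fun b _ => by ring
  rw [e, sum_detWeight]; ring

include hα hβ hQ hR hpd in
lemma valIter_master (k : ℕ) :
    ∀ (P P' Pbar Pbar' : Fin L → Matrix (Fin m) (Fin m) ℝ),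
    (∀ l, (P l).PosDef) → (∀ l, (P' l).PosDef) →
    (∀ l, (Pbar l).PosDef) → (∀ l, (Pbar' l).PosDef) →
    (P' a - P a).PosSemidef →
    (∀ l, l ≠ a → (Pbar' l - Pbar l).PosSemidef) →
    (∀ l, l ≠ a → (P l - P' l).PosSemidef) →
    (Pbar a - Pbar' a).PosSemidef →
    valIter a α β c F Q H R pd k P' Pbar' ≤ valIter a α β c F Q H R pd k P Pbar := by
  induction k with
  | zero =>
    intro P P' Pbar Pbar' hP hP' hPbar hPbar' h1 h2 h3 h4
    simp only [valIter]
    have := stopCost_mono hα hβ hP hP' hPbar hPbar' h1 h2 h3 h4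
    linarith
  | succ k ih =>
    intro P P' Pbar Pbar' hP hP' hPbar hPbar' h1 h2 h3 h4
    simp only [valIter]
    refine min_le_min (le_refl 0) ?_
    have hTP : ∀ (X : Fin L → Matrix (Fin m) (Fin m) ℝ), (∀ l, (X l).PosDef) →
        ∀ (b : Fin L → Bool) l,
        (kalmanUpdate (F l) (Q l) (H l) (R l) (X l) (b l)).PosDef :=
      fun X hX b l => kalman_pd (hX l) (hQ l) (hR l) (b l)
    have hTbar : ∀ (X : Fin L → Matrix (Fin m) (Fin m) ℝ), (∀ l, (X l).PosDef) →
        ∀ l, (lyapUpdate (F l) (Q l) (X l)).PosDef := by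
      intro X hX l
      rw [lyap_eq_kalman (H := H l) (R := R l)]
      exact kalman_pd (hX l) (hQ l) (hR l) false
    have hV : ∀ b : Fin L → Bool,
        valIter a α β c F Q H R pd k
          (fun l => kalmanUpdate (F l) (Q l) (H l) (R l) (P' l) (b l))
          (fun l => lyapUpdate (F l) (Q l) (Pbar' l))
        ≤ valIter a α β c F Q H R pd k
          (fun l => kalmanUpdate (F l) (Q l) (H l) (R l) (P l) (b l))
          (fun l => lyapUpdate (F l) (Q l) (Pbar l)) := by
      intro b
      refine ih _ _ _ _ (fun l => hTP P hP b l) (fun l => hTP P' hP' b l)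
        (fun l => hTbar Pbar hPbar l) (fun l => hTbar Pbar' hPbar' l)
        ?_ ?_ ?_ ?_
      · exact kalman_mono (hP a) (hP' a) (hR a) h1 (b a)
      · intro l hl
        rw [lyap_eq_kalman (H := H l) (R := R l), lyap_eq_kalman (H := H l) (R := R l)]
        exact kalman_mono (hPbar l) (hPbar' l) (hR l) (h2 l hl) false
      · intro l hl
        exact kalman_mono (hP' l) (hP l) (hR l) (h3 l hl) (b l)
      · rw [lyap_eq_kalman (H := H a) (R := R a), lyap_eq_kalman (H := H a) (R := R a)]
        exact kalman_mono (hPbar' a) (hPbar a) (hR a) h4 false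
    have hVsum : ∑ b : Fin L → Bool, detWeight pd b *
          valIter a α β c F Q H R pd k
            (fun l => kalmanUpdate (F l) (Q l) (H l) (R l) (P' l) (b l))
            (fun l => lyapUpdate (F l) (Q l) (Pbar' l))
        ≤ ∑ b : Fin L → Bool, detWeight pd b *
          valIter a α β c F Q H R pd k
            (fun l => kalmanUpdate (F l) (Q l) (H l) (R l) (P l) (b l))
            (fun l => lyapUpdate (F l) (Q l) (Pbar l)) :=
      Finset.sum_le_sum fun b _ =>
        mul_le_mul_of_nonneg_left (hV b) (detWeight_nonneg hpd b)
    have hC : contCost a α β c F Q H R pd P' Pbar' ≤ contCost a α β c F Q H R pd P Pbar := by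
      unfold contCost
      have e1 : ∀ (X Xbar : Fin L → Matrix (Fin m) (Fin m) ℝ),
          c - stopCost a α β X Xbar + ∑ b : Fin L → Bool, detWeight pd b *
            stopCost a α β
              (fun l => kalmanUpdate (F l) (Q l) (H l) (R l) (X l) (b l))
              (fun l => lyapUpdate (F l) (Q l) (Xbar l))
          = c + ∑ b : Fin L → Bool, detWeight pd b *
              (stopCost a α β
                (fun l => kalmanUpdate (F l) (Q l) (H l) (R l) (X l) (b l))
                (fun l => lyapUpdate (F l) (Q l) (Xbar l)) - stopCost a α β X Xbar) := by
        intro X Xbar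
        rw [← sum_weight_shift]; ring
      rw [e1, e1]
      refine add_le_add_right (Finset.sum_le_sum fun b _ => ?_) c
      exact mul_le_mul_of_nonneg_left
        (stopCost_diff hα hβ hQ hR hP hP' hPbar hPbar' h1 h2 h3 h4 b)
        (detWeight_nonneg hpd b)
    linarith

lemma sub_self_psd (A : Matrix (Fin m) (Fin m) ℝ) : (A - A).PosSemidef := by
  rw [sub_self]; exact Matrix.PosSemidef.zero

lemma update_pd {Z : Fin L → Matrix (Fin m) (Fin m) ℝ} (hZ : ∀ l, (Z l).PosDef)
    {X : Matrix (Fin m) (Fin m) ℝ} (hX : X.PosDef) (j l : Fin L) :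
    ((Function.update Z j X) l).PosDef := by
  rcases eq_or_ne l j with rfl | hl
  · rw [Function.update_self]; exact hX
  · rw [Function.update_of_ne hl]; exact hZ l

end Master
end VI
end ValIterAux

/-- Every value-iteration iterate `V_k(P, P̄)` is, with respect to the Loewner order and
with all other components held fixed: decreasing in `P_a`, decreasing in `P̄_l` for
`l ≠ a`, increasing in `P_l` for `l ≠ a`, and increasing in `P̄_a`. -/
theorem valIter_monotone {L m p : ℕ} (hL : 2 ≤ L) (a : Fin L)
    (α β : Fin L → ℝ) (hα : ∀ l, 0 ≤ α l) (hβ : ∀ l, 0 ≤ β l) (c : ℝ)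
    (F Q : Fin L → Matrix (Fin m) (Fin m) ℝ)
    (H : Fin L → Matrix (Fin p) (Fin m) ℝ)
    (R : Fin L → Matrix (Fin p) (Fin p) ℝ)
    (hQ : ∀ l, (Q l).PosDef) (hR : ∀ l, (R l).PosDef)
    (pd : Fin L → ℝ) (hpd : ∀ l, pd l ∈ Set.Icc (0 : ℝ) 1)
    (k : ℕ)
    (P Pbar : Fin L → Matrix (Fin m) (Fin m) ℝ)
    (hP : ∀ l, (P l).PosDef) (hPbar : ∀ l, (Pbar l).PosDef) :
    (∀ X : Matrix (Fin m) (Fin m) ℝ, X.PosDef → (X - P a).PosSemidef →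
        valIter a α β c F Q H R pd k (Function.update P a X) Pbar
          ≤ valIter a α β c F Q H R pd k P Pbar) ∧
    (∀ l : Fin L, l ≠ a → ∀ X : Matrix (Fin m) (Fin m) ℝ, X.PosDef →
        (X - Pbar l).PosSemidef →
        valIter a α β c F Q H R pd k P (Function.update Pbar l X)
          ≤ valIter a α β c F Q H R pd k P Pbar) ∧
    (∀ l : Fin L, l ≠ a → ∀ X : Matrix (Fin m) (Fin m) ℝ, X.PosDef →
        (X - P l).PosSemidef →
        valIter a α β c F Q H R pd k P Pbar
          ≤ valIter a α β c F Q H R pd k (Function.update P l X) Pbar) ∧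
    (∀ X : Matrix (Fin m) (Fin m) ℝ, X.PosDef → (X - Pbar a).PosSemidef →
        valIter a α β c F Q H R pd k P Pbar
          ≤ valIter a α β c F Q H R pd k P (Function.update Pbar a X)) := by
  refine ⟨?_, ?_, ?_, ?_⟩
  · intro X hX hXP
    refine ValIterAux.valIter_master hα hβ hQ hR hpd k P (Function.update P a X) Pbar Pbar
      hP (ValIterAux.update_pd hP hX a) hPbar hPbar ?_ ?_ ?_ ?_
    · rw [Function.update_self]; exact hXP
    · intro l _; exact ValIterAux.sub_self_psd _
    · intro l hl; rw [Function.update_of_ne hl]; exact ValIterAux.sub_self_psd _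
    · exact ValIterAux.sub_self_psd _
  · intro l hl X hX hXP
    refine ValIterAux.valIter_master hα hβ hQ hR hpd k P P Pbar (Function.update Pbar l X)
      hP hP hPbar (ValIterAux.update_pd hPbar hX l) (ValIterAux.sub_self_psd _) ?_
      (fun l' _ => ValIterAux.sub_self_psd _) ?_
    · intro l' hl'
      rcases eq_or_ne l' l with rfl | hne
      · rw [Function.update_self]; exact hXP
      · rw [Function.update_of_ne hne]; exact ValIterAux.sub_self_psd _
    · rw [Function.update_of_ne (Ne.symm hl)]; exact ValIterAux.sub_self_psd _
  · intro l hl X hX hXP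
    refine ValIterAux.valIter_master hα hβ hQ hR hpd k (Function.update P l X) P Pbar Pbar
      (ValIterAux.update_pd hP hX l) hP hPbar hPbar ?_
      (fun l' _ => ValIterAux.sub_self_psd _) ?_ (ValIterAux.sub_self_psd _)
    · rw [Function.update_of_ne (Ne.symm hl)]; exact ValIterAux.sub_self_psd _
    · intro l' hl'
      rcases eq_or_ne l' l with rfl | hne
      · rw [Function.update_self]; exact hXP
      · rw [Function.update_of_ne hne]; exact ValIterAux.sub_self_psd _
  · intro X hX hXP
    refine ValIterAux.valIter_master hα hβ hQ hR hpd k P P (Function.update Pbar a X) Pbar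
      hP hP (ValIterAux.update_pd hPbar hX a) hPbar (ValIterAux.sub_self_psd _) ?_
      (fun l' _ => ValIterAux.sub_self_psd _) ?_
    · intro l' hl'; rw [Function.update_of_ne hl']; exact ValIterAux.sub_self_psd _
    · rw [Function.update_self]; exact hXP
end
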